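/- arXiv:1807.01530 — 3 statements merged into one kernel-verified Lean document; each statement's English description precedes it below -/
import Mathlib

section
/- Let A ⊆ X be a measurable set with 0 < μ(A) < ∞, let f : A → [-∞,∞] be measurable with |f| < ∞ a.e. on A, and let 0 < γ < 1. Then lim_{ε→0⁺} m_f^{γ−ε}(A) = m_f^γ(A). -/
open MeasureTheory Metric Filter Set Topology
open scoped ENNReal

/-- The `γ`-median of `f` over `A`:
`m_f^γ(A) = inf {a ∈ ℝ : μ({x ∈ A : f(x) > a}) < γ·μ(A)}`. -/
noncomputable def med {X : Type*} [MeasurableSpace X] (μ : Measure X)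
    (f : X → EReal) (A : Set X) (γ : ℝ) : ℝ :=
  sInf {a : ℝ | μ {x ∈ A | (a : EReal) < f x} < ENNReal.ofReal γ * μ A}

private lemma ereal_top_of_forall_nat_lt (e : EReal) (h : ∀ n : ℕ, ((n : ℝ) : EReal) < e) :
    e = ⊤ := by
  induction e using EReal.rec with
  | bot => exact absurd (h 0) (by simp)
  | top => rfl
  | coe r =>
    obtain ⟨n, hn⟩ := exists_nat_gt r
    exact absurd (h n) (by exact_mod_cast not_lt.2 hn.le)

private lemma ereal_exists_neg_nat_lt (e : EReal) (h : e ≠ ⊥) :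
    ∃ n : ℕ, ((-(n : ℝ)) : EReal) < e := by
  induction e using EReal.rec with
  | bot => exact absurd rfl h
  | top => exact ⟨0, by simp⟩
  | coe r =>
    obtain ⟨n, hn⟩ := exists_nat_gt (-r)
    exact ⟨n, by exact_mod_cast (by linarith : -(n:ℝ) < r)⟩


/-- `lim_{ε→0⁺} m_f^{γ−ε}(A) = m_f^γ(A)`. -/
theorem stmt5 {X : Type*} [MetricSpace X] [MeasurableSpace X] [BorelSpace X]
    (μ : Measure X)
    (hball : ∀ (x : X) (r : ℝ), 0 < r → 0 < μ (ball x r) ∧ μ (ball x r) < ⊤)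
    (A : Set X) (hA : MeasurableSet A) (hA0 : 0 < μ A) (hA1 : μ A < ⊤)
    (f : X → EReal) (hf : Measurable f)
    (hfin : ∀ᵐ x ∂(μ.restrict A), f x ≠ ⊤ ∧ f x ≠ ⊥)
    (γ : ℝ) (hγ0 : 0 < γ) (hγ1 : γ < 1) :
    Tendsto (fun ε : ℝ => med μ f A (γ - ε)) (𝓝[>] 0) (𝓝 (med μ f A γ)) := by
  set S : ℝ → Set ℝ := fun t => {a : ℝ | μ {x ∈ A | (a : EReal) < f x} < ENNReal.ofReal t * μ A}
    with hS
  have hmed : ∀ t, med μ f A t = sInf (S t) := fun t => rfl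
  -- measurability of the superlevel sets
  have hms : ∀ a : ℝ, MeasurableSet {x ∈ A | (a : EReal) < f x} := fun a =>
    hA.inter (hf measurableSet_Ioi)
  -- antitonicity of measures of superlevel sets
  have hmono : ∀ a b : ℝ, a ≤ b →
      μ {x ∈ A | (b : EReal) < f x} ≤ μ {x ∈ A | (a : EReal) < f x} := by
    intro a b hab
    apply measure_mono
    intro x hx
    exact ⟨hx.1, lt_of_le_of_lt (by exact_mod_cast hab) hx.2⟩
  -- upward closedness
  have hup : ∀ t, ∀ a b : ℝ, a ∈ S t → a ≤ b → b ∈ S t := fun t a b ha hab =>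
    lt_of_le_of_lt (hmono a b hab) ha
  -- S t ⊆ S t' when t ≤ t'
  have hSmono : ∀ t t' : ℝ, t ≤ t' → S t ⊆ S t' := by
    intro t t' h a ha
    exact lt_of_lt_of_le ha (mul_le_mul_left (ENNReal.ofReal_le_ofReal h) _)
  -- top set null
  have htopnull : μ {x ∈ A | f x = ⊤} = 0 := by
    have h1 : μ.restrict A {x | f x = ⊤} = 0 := by
      rw [measure_eq_zero_iff_ae_notMem]
      filter_upwards [hfin] with x hx h'
      exact hx.1 h'
    have := (Measure.restrict_apply (hf (measurableSet_singleton ⊤))).symm.trans h1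
    have heq : {x ∈ A | f x = ⊤} = (fun x => f x) ⁻¹' {⊤} ∩ A := by
      ext x; simp [and_comm]
    rw [heq]; exact this
  -- nonempty S t for t > 0
  have hne : ∀ t : ℝ, 0 < t → (S t).Nonempty := by
    intro t ht
    have htend : Tendsto (fun n : ℕ => μ {x ∈ A | ((n : ℝ) : EReal) < f x}) atTop
        (𝓝 (μ (⋂ n : ℕ, {x ∈ A | ((n : ℝ) : EReal) < f x}))) := by
      apply tendsto_measure_iInter_atTop (fun n => (hms _).nullMeasurableSet)
      · intro n m hnm x hx
        exact ⟨hx.1, lt_of_le_of_lt (by exact_mod_cast hnm) hx.2⟩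
      · exact ⟨0, ((measure_mono (inter_subset_left)).trans_lt hA1).ne⟩
    have hInull : μ (⋂ n : ℕ, {x ∈ A | ((n : ℝ) : EReal) < f x}) = 0 := by
      refine measure_mono_null ?_ htopnull
      intro x hx
      simp only [mem_iInter] at hx
      exact ⟨(hx 0).1, ereal_top_of_forall_nat_lt _ fun n => (hx n).2⟩
    rw [hInull] at htend
    have hpos : 0 < ENNReal.ofReal t * μ A :=
      ENNReal.mul_pos (by simpa using ht) hA0.ne'
    obtain ⟨n, hn⟩ := (htend.eventually (eventually_lt_nhds hpos)).exists
    exact ⟨(n : ℝ), hn⟩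
  -- bounded below S t for t < 1
  have hbdd : ∀ t : ℝ, t < 1 → BddBelow (S t) := by
    intro t ht
    have htend : Tendsto (fun n : ℕ => μ {x ∈ A | ((-(n : ℝ)) : EReal) < f x}) atTop
        (𝓝 (μ (⋃ n : ℕ, {x ∈ A | ((-(n : ℝ)) : EReal) < f x}))) := by
      apply tendsto_measure_iUnion_atTop
      intro n m hnm x hx
      refine ⟨hx.1, lt_of_le_of_lt ?_ hx.2⟩
      exact_mod_cast neg_le_neg (by exact_mod_cast hnm)
    have hUeq : μ (⋃ n : ℕ, {x ∈ A | ((-(n : ℝ)) : EReal) < f x}) = μ A := by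
      apply le_antisymm
      · exact measure_mono (iUnion_subset fun n => inter_subset_left)
      · have hbotnull : μ {x ∈ A | f x = ⊥} = 0 := by
          have h1 : μ.restrict A {x | f x = ⊥} = 0 := by
            rw [measure_eq_zero_iff_ae_notMem]
            filter_upwards [hfin] with x hx h'
            exact hx.2 h'
          have := (Measure.restrict_apply (hf (measurableSet_singleton ⊥))).symm.trans h1
          have heq : {x ∈ A | f x = ⊥} = (fun x => f x) ⁻¹' {⊥} ∩ A := by
            ext x; simp [and_comm]
          rw [heq]; exact this
        have : μ A ≤ μ (⋃ n : ℕ, {x ∈ A | ((-(n : ℝ)) : EReal) < f x}) + μ {x ∈ A | f x = ⊥} := by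
          refine le_trans (measure_mono ?_) (measure_union_le _ _)
          intro x hxA
          by_cases hb : f x = ⊥
          · exact Or.inr ⟨hxA, hb⟩
          · left
            rw [mem_iUnion]
            obtain ⟨n, hn⟩ := ereal_exists_neg_nat_lt (f x) hb
            exact ⟨n, hxA, hn⟩
        simpa [hbotnull] using this
    rw [hUeq] at htend
    have hlt : ENNReal.ofReal t * μ A < μ A := by
      calc ENNReal.ofReal t * μ A < 1 * μ A := by
            refine ENNReal.mul_lt_mul_left hA0.ne' hA1.ne ?_
            exact ENNReal.ofReal_lt_one.2 ht
        _ = μ A := one_mul _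
    obtain ⟨n, hn⟩ := (htend.eventually (eventually_gt_nhds hlt)).exists
    refine ⟨-(n : ℝ), fun a ha => ?_⟩
    by_contra h
    push_neg at h
    exact absurd (lt_of_lt_of_le hn (hmono a (-(n:ℝ)) h.le)) (not_lt.2 ha.le)
  have hneγ : (S γ).Nonempty := hne γ hγ0
  have hbddγ : BddBelow (S γ) := hbdd γ hγ1
  rw [tendsto_order]
  constructor
  · -- lower bound
    intro b hb
    filter_upwards [Ioo_mem_nhdsGT_of_mem (show (0:ℝ) ∈ Ico 0 γ from ⟨le_refl 0, hγ0⟩)]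
      with ε hε
    have h1 : med μ f A γ ≤ med μ f A (γ - ε) := by
      rw [hmed, hmed]
      exact csInf_le_csInf hbddγ (hne _ (by linarith [hε.2])) (hSmono _ _ (by linarith [hε.1]))
    exact lt_of_lt_of_le hb h1
  · -- upper bound
    intro b hb
    set a : ℝ := (med μ f A γ + b) / 2 with ha
    have ham : med μ f A γ < a := by rw [ha]; linarith
    have hab : a < b := by rw [ha]; linarith
    have haS : a ∈ S γ := by
      obtain ⟨c, hc, hca⟩ := exists_lt_of_csInf_lt hneγ (by rw [← hmed]; exact ham)
      exact hup γ c a hc hca.le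
    have htend : Tendsto (fun ε : ℝ => ENNReal.ofReal (γ - ε) * μ A) (𝓝[>] (0:ℝ))
        (𝓝 (ENNReal.ofReal γ * μ A)) := by
      have h1 : Tendsto (fun ε : ℝ => ENNReal.ofReal (γ - ε)) (𝓝[>] (0:ℝ))
          (𝓝 (ENNReal.ofReal γ)) := by
        have : Tendsto (fun ε : ℝ => γ - ε) (𝓝[>] (0:ℝ)) (𝓝 γ) := by
          have h2 : Tendsto (fun ε : ℝ => γ - ε) (𝓝 (0:ℝ)) (𝓝 (γ - 0)) :=
            (tendsto_const_nhds.sub tendsto_id)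
          simpa using h2.mono_left nhdsWithin_le_nhds
        exact (ENNReal.continuous_ofReal.tendsto γ).comp this
      exact ENNReal.Tendsto.mul_const h1 (Or.inl (ENNReal.ofReal_pos.2 hγ0).ne')
    filter_upwards [htend.eventually (eventually_gt_nhds haS),
        Ioo_mem_nhdsGT_of_mem (show (0:ℝ) ∈ Ico 0 γ from ⟨le_refl 0, hγ0⟩)] with ε hε hε'
    have haSε : a ∈ S (γ - ε) := hε
    have : med μ f A (γ - ε) ≤ a := by
      rw [hmed]
      exact csInf_le ((hbddγ).mono (hSmono _ _ (by linarith [hε'.1]))) haSε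
    exact lt_of_le_of_lt this hab
end

section
/- Let 𝓑 be a homothecy invariant Busemann–Feller basis on ℝ^n which is a density basis. Then for every 0 < γ < 1 there exists a constant C = C(γ) such that |{x ∈ ℝ^n : M^γ_𝓑 f(x) > λ}| ≤ C·|{x ∈ ℝ^n : |f(x)| > λ}| for every f ∈ L^0(ℝ^n) and every λ > 0. -/
open MeasureTheory Metric Filter Set Topology
open scoped ENNReal NNReal

/-- `f ∈ L⁰(X)`: `f` is measurable and finite almost everywhere. -/
def MemL0 {X : Type*} [MeasurableSpace X] (μ : Measure X) (f : X → EReal) : Prop :=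
  Measurable f ∧ ∀ᵐ x ∂μ, f x ≠ ⊤ ∧ f x ≠ ⊥

/-- A differentiation basis on a metric measure space: each `𝓑(x)` consists of bounded
measurable sets of positive measure containing `x`, with sets of arbitrarily small diameter. -/
structure IsDiffBasis {X : Type*} [MetricSpace X] [MeasurableSpace X]
    (μ : Measure X) (𝓑 : X → Set (Set X)) : Prop where
  mem_of : ∀ x B, B ∈ 𝓑 x → x ∈ B
  measurableSet : ∀ x B, B ∈ 𝓑 x → MeasurableSet B
  bounded : ∀ x B, B ∈ 𝓑 x → Bornology.IsBounded B
  pos : ∀ x B, B ∈ 𝓑 x → 0 < μ B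
  small : ∀ x, ∀ ε : ℝ, 0 < ε → ∃ B ∈ 𝓑 x, diam B < ε

/-- A Busemann–Feller basis: a differentiation basis whose members are open and such that
`x ∈ B ∈ 𝓑` implies `B ∈ 𝓑(x)`. -/
structure IsBFBasis {X : Type*} [MetricSpace X] [MeasurableSpace X]
    (μ : Measure X) (𝓑 : X → Set (Set X)) extends IsDiffBasis μ 𝓑 : Prop where
  isOpen : ∀ x B, B ∈ 𝓑 x → IsOpen B
  feller : ∀ x y B, B ∈ 𝓑 y → x ∈ B → B ∈ 𝓑 x

/-- `lim_{𝓑 ∋ B → x} F(B) = L`: the limit as `diam B → 0` over `B ∈ 𝓑(x)`. -/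
def BasisLim {X : Type*} [MetricSpace X] (𝓑 : X → Set (Set X)) (x : X)
    (F : Set X → ℝ) (L : ℝ) : Prop :=
  ∀ ε : ℝ, 0 < ε → ∃ δ : ℝ, 0 < δ ∧ ∀ B ∈ 𝓑 x, diam B < δ → |F B - L| < ε

/-- A density basis: for every measurable `A`, `lim_{𝓑∋B→x} μ(A∩B)/μ(B) = χ_A(x)` a.e. -/
def IsDensityBasis {X : Type*} [MetricSpace X] [MeasurableSpace X]
    (μ : Measure X) (𝓑 : X → Set (Set X)) : Prop :=
  ∀ A : Set X, MeasurableSet A → ∀ᵐ x ∂μ,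
    BasisLim 𝓑 x (fun B => (μ (A ∩ B) / μ B).toReal) (A.indicator (fun _ => (1 : ℝ)) x)

/-- The `γ`-median maximal function `M^γ_𝓑 f(x) = sup {m^γ_{|f|}(B) : x ∈ B ∈ 𝓑}`. -/
noncomputable def medMax {X : Type*} [MetricSpace X] [MeasurableSpace X] (μ : Measure X)
    (𝓑 : X → Set (Set X)) (f : X → EReal) (γ : ℝ) (x : X) : EReal :=
  ⨆ (B : Set X) (_ : ∃ y, B ∈ 𝓑 y) (_ : x ∈ B),
    (med μ (fun z => max (f z) (-f z)) B γ : EReal)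

/-- The `L^p`-(quasi)norm of an extended-real valued function, `0 < p < ∞`. -/
noncomputable def lpN {X : Type*} [MeasurableSpace X] (μ : Measure X) (p : ℝ)
    (f : X → EReal) : ℝ≥0∞ :=
  (∫⁻ x, (f x).abs ^ p ∂μ) ^ (1 / p)

/-- `𝓑` is homothecy invariant: homothetic images (under `z ↦ a + r • z`, `r > 0`)
of basis sets belong to the basis. -/
def HomInv {n : ℕ}
    (𝓑 : EuclideanSpace ℝ (Fin n) → Set (Set (EuclideanSpace ℝ (Fin n)))) : Prop :=
  ∀ B : Set (EuclideanSpace ℝ (Fin n)), (∃ y, B ∈ 𝓑 y) →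
    ∀ (a : EuclideanSpace ℝ (Fin n)) (r : ℝ), 0 < r →
      ∃ y, (fun z => a + r • z) '' B ∈ 𝓑 y


section AuxHom
open Pointwise Bornology
variable {n : ℕ}
local notation "X" => EuclideanSpace ℝ (Fin n)

lemma himg_volume (a : X) {t : ℝ} (ht : 0 < t) (s : Set X) :
    volume ((fun z => a + t • z) '' s) = ENNReal.ofReal (t ^ n) * volume s := by
  rw [show (fun z => a + t • z) '' s = a +ᵥ t • s by
      rw [← Set.image_vadd, ← Set.image_smul, Set.image_image]; rfl,
    measure_vadd, MeasureTheory.Measure.addHaar_smul, finrank_euclideanSpace_fin,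
    abs_of_nonneg (pow_nonneg ht.le n)]

lemma himg_leftInv (a : X) {t : ℝ} (ht : t ≠ 0) :
    Function.LeftInverse (fun w => t⁻¹ • (w - a)) (fun z => a + t • z) := by
  intro z; simp [smul_smul, inv_mul_cancel₀ ht]

lemma himg_rightInv (a : X) {t : ℝ} (ht : t ≠ 0) :
    Function.RightInverse (fun w => t⁻¹ • (w - a)) (fun z => a + t • z) := by
  intro w; simp [smul_smul, mul_inv_cancel₀ ht]

lemma himg_measurable (a : X) {t : ℝ} (ht : t ≠ 0) {s : Set X} (hs : MeasurableSet s) :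
    MeasurableSet ((fun z => a + t • z) '' s) := by
  rw [Set.image_eq_preimage_of_inverse (himg_leftInv a ht) (himg_rightInv a ht)]
  exact hs.preimage (by fun_prop)

lemma himg_lipschitz (a : X) {t : ℝ} (ht : 0 ≤ t) :
    LipschitzWith t.toNNReal (fun z : X => a + t • z) := by
  apply LipschitzWith.of_dist_le_mul
  intro x y
  rw [dist_add_left, dist_smul₀, Real.norm_eq_abs, abs_of_nonneg ht, Real.coe_toNNReal _ ht]

lemma himg_diam (a : X) {t : ℝ} (ht : 0 ≤ t) {s : Set X} (hs : Bornology.IsBounded s) :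
    diam ((fun z => a + t • z) '' s) ≤ t * diam s := by
  have := (himg_lipschitz a ht).diam_image_le s hs
  rwa [Real.coe_toNNReal _ ht] at this

lemma himg_dist (a : X) {t : ℝ} (x z : X) :
    dist (a + t • z) (a + t • x) = |t| * dist z x := by
  rw [dist_add_left, dist_smul₀, Real.norm_eq_abs]

end AuxHom

/-- The halo set of `E`. -/
def haloSet {n : ℕ} (𝓑 : EuclideanSpace ℝ (Fin n) → Set (Set (EuclideanSpace ℝ (Fin n))))
    (γ : ℝ) (E : Set (EuclideanSpace ℝ (Fin n))) : Set (EuclideanSpace ℝ (Fin n)) :=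
  ⋃₀ {B | (∃ y, B ∈ 𝓑 y) ∧ ENNReal.ofReal γ * volume B ≤ volume (E ∩ B)}

section Stage
open Bornology
variable {n : ℕ}
local notation "X" => EuclideanSpace ℝ (Fin n)

lemma buildStage (𝓑 : EuclideanSpace ℝ (Fin n) → Set (Set (EuclideanSpace ℝ (Fin n))))
    (h𝓑 : IsBFBasis volume 𝓑) (hhom : HomInv 𝓑) {γ : ℝ} (hγ0 : 0 < γ)
    {E : Set X} (hE : MeasurableSet E) {ε : ℝ≥0} (hε : 0 < ε)
    (hfail : ((ε : ℝ≥0∞))⁻¹ * volume E < volume (haloSet 𝓑 γ E))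
    {d : ℝ} (hd : 0 < d) :
    ∃ S G : Set X, MeasurableSet S ∧
      volume S ≤ 2 * (ε : ℝ≥0∞) * volume (ball (0 : X) 2) ∧
      volume (closedBall (0 : X) 1 \ G) = 0 ∧
      ∀ x ∈ G, ∃ W ∈ 𝓑 x, diam W < d ∧ 0 < volume W ∧ volume W < ⊤ ∧
        ENNReal.ofReal γ * volume W ≤ volume (S ∩ W) := by
  classical
  set μ : Measure X := volume with hμ
  -- the collection of witness sets
  set coll : Set (Set X) := {B | (∃ y, B ∈ 𝓑 y) ∧ ENNReal.ofReal γ * μ B ≤ μ (E ∩ B)} with hcoll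
  have collOpen : ∀ B ∈ coll, IsOpen B := by
    rintro B ⟨⟨y, hy⟩, -⟩; exact h𝓑.isOpen y B hy
  have collBounded : ∀ B ∈ coll, IsBounded B := by
    rintro B ⟨⟨y, hy⟩, -⟩; exact h𝓑.bounded y B hy
  have collPos : ∀ B ∈ coll, 0 < μ B := by
    rintro B ⟨⟨y, hy⟩, -⟩; exact h𝓑.pos y B hy
  -- E has positive finite measure
  have hγ0' : ENNReal.ofReal γ ≠ 0 := by
    simp [ENNReal.ofReal_eq_zero, not_le, hγ0]
  have hEpos : 0 < μ E := by
    rcases eq_or_lt_of_le (zero_le : 0 ≤ μ E) with h0 | h; swap; · exact h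
    exfalso
    have hhalo : haloSet 𝓑 γ E = ∅ := by
      apply Set.eq_empty_of_subset_empty
      rintro x ⟨B, hBc, hxB⟩
      have hpos := collPos B hBc
      have hle : ENNReal.ofReal γ * μ B ≤ 0 := hBc.2.trans
        (le_trans (measure_mono Set.inter_subset_left) (le_of_eq h0.symm))
      rw [nonpos_iff_eq_zero, mul_eq_zero] at hle
      rcases hle with h | h
      · exact hγ0' h
      · exact hpos.ne' h
    rw [show haloSet 𝓑 γ E = ⋃₀ coll from rfl] at hfail hhalo
    rw [hhalo] at hfail
    simp at hfail
  have hEfin : μ E < ⊤ := by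
    by_contra h
    push_neg at h
    have : ((ε : ℝ≥0∞))⁻¹ * μ E = ⊤ := by
      rw [top_le_iff.1 h, ENNReal.mul_top]
      simp [hε.ne']
    rw [this] at hfail
    exact absurd hfail (by simp)
  -- compact subset of the halo
  have hhaloOpen : IsOpen (haloSet 𝓑 γ E) := isOpen_sUnion collOpen
  obtain ⟨K, hKsub, hKc, hKgt⟩ := hhaloOpen.exists_lt_isCompact hfail
  -- finite subcover
  have hKcov : K ⊆ ⋃ i : {B : Set X // B ∈ coll}, (i : Set X) := by
    intro x hx
    obtain ⟨B, hB, hxB⟩ := hKsub hx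
    exact Set.mem_iUnion.2 ⟨⟨B, hB⟩, hxB⟩
  obtain ⟨s, hs⟩ := hKc.elim_finite_subcover (fun i : {B : Set X // B ∈ coll} => (i : Set X))
    (fun i => collOpen i i.2) hKcov
  set U : Set X := ⋃ i ∈ s, (i : Set X) with hU
  have hUopen : IsOpen U := isOpen_biUnion fun i _ => collOpen i i.2
  have hUmeas : MeasurableSet U := hUopen.measurableSet
  have hUbdd : IsBounded U := isBounded_biUnion s.finite_toSet |>.2 fun i _ => collBounded i i.2
  have hμUgt : ((ε : ℝ≥0∞))⁻¹ * μ E < μ U := hKgt.trans_le (measure_mono hs)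
  have hUpos : 0 < μ U :=
    lt_of_le_of_lt zero_le hμUgt |>.trans_le le_rfl
  -- μ E < ε * μ U
  have hεne : (ε : ℝ≥0∞) ≠ 0 := by exact_mod_cast hε.ne'
  have hEε : μ E < (ε : ℝ≥0∞) * μ U := by
    have h1 : (ε : ℝ≥0∞) * (((ε : ℝ≥0∞))⁻¹ * μ E) < (ε : ℝ≥0∞) * μ U :=
      (ENNReal.mul_lt_mul_iff_right hεne ENNReal.coe_ne_top).2 hμUgt
    rwa [← mul_assoc, ENNReal.mul_inv_cancel hεne ENNReal.coe_ne_top, one_mul] at h1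
  set A : Set X := E ∩ U with hA
  have hAmeas : MeasurableSet A := hE.inter hUmeas
  have hAlt : μ A < (ε : ℝ≥0∞) * μ U := lt_of_le_of_lt (measure_mono Set.inter_subset_left) hEε
  -- the enclosing ball
  obtain ⟨r₁, hr₁⟩ := hUbdd.subset_closedBall 0
  set r₀ : ℝ := max r₁ 1 with hr₀def
  have hr₀1 : (1:ℝ) ≤ r₀ := le_max_right _ _
  have hr₀ : 0 < r₀ := lt_of_lt_of_le one_pos hr₀1
  have hUr : U ⊆ closedBall (0 : X) r₀ :=
    hr₁.trans (closedBall_subset_closedBall (le_max_left _ _))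
  have hUfin : μ U < ⊤ :=
    lt_of_le_of_lt (measure_mono hUr) (isCompact_closedBall _ _).measure_lt_top
  -- compact K₂ ⊆ U with half measure and nonempty interior
  obtain ⟨K₁, hK₁U, hK₁c, hK₁⟩ :=
    hUopen.exists_lt_isCompact (ENNReal.half_lt_self hUpos.ne' hUfin.ne)
  obtain ⟨z₀, hz₀⟩ := nonempty_of_measure_ne_zero hUpos.ne'
  obtain ⟨δ, hδ0, hδU⟩ := Metric.isOpen_iff.1 hUopen z₀ hz₀
  set K₂ : Set X := K₁ ∪ closedBall z₀ (δ/2) with hK₂def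
  have hK₂c : IsCompact K₂ := hK₁c.union (isCompact_closedBall _ _)
  have hK₂U : K₂ ⊆ U := Set.union_subset hK₁U ((closedBall_subset_ball (by linarith)).trans hδU)
  have hK₂meas : MeasurableSet K₂ := hK₂c.measurableSet
  have hK₂half : μ U ≤ 2 * μ K₂ := by
    have h2 : μ U / 2 ≤ μ K₂ := hK₁.le.trans (measure_mono Set.subset_union_left)
    calc μ U = 2 * (μ U / 2) := (ENNReal.mul_div_cancel' (by norm_num) (by norm_num)).symm
    _ ≤ 2 * μ K₂ := mul_le_mul_right h2 _
  have hK₂pos : 0 < μ K₂ :=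
    lt_of_lt_of_le (measure_closedBall_pos μ z₀ (by linarith)) (measure_mono Set.subset_union_right)
  have hK₂fin : μ K₂ < ⊤ := lt_of_le_of_lt (measure_mono hK₂U) hUfin
  -- constant for Vitali
  set v1 : ℝ≥0∞ := μ (ball (0:X) 1) with hv1
  have hv1fin : v1 ≠ ⊤ := (lt_of_le_of_lt (measure_mono ball_subset_closedBall)
    (isCompact_closedBall _ _).measure_lt_top).ne
  set Cnum : ℝ≥0∞ := ENNReal.ofReal ((3*r₀)^n) * v1 with hCnum
  have hCnumfin : Cnum ≠ ⊤ := ENNReal.mul_ne_top ENNReal.ofReal_ne_top hv1fin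
  set C : ℝ≥0 := (Cnum / μ K₂).toNNReal with hC
  have hCle : Cnum ≤ (C : ℝ≥0∞) * μ K₂ := by
    have hh : (C : ℝ≥0∞) = Cnum / μ K₂ :=
      ENNReal.coe_toNNReal (ENNReal.div_lt_top hCnumfin hK₂pos.ne').ne
    rw [hh, ENNReal.div_mul_cancel hK₂pos.ne' hK₂fin.ne]
  -- scales
  set tmax : ℝ := min (d / (2*r₀+1)) (1/(2*r₀)) with htmaxdef
  have htmax : 0 < tmax := lt_min (div_pos hd (by linarith)) (by positivity)
  -- the Vitali family
  set tset : Set (X × ℝ) := {p | p.1 ∈ closedBall (0:X) 1 ∧ 0 < p.2 ∧ p.2 ≤ tmax} with htset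
  set Bf : X × ℝ → Set X := fun p => (fun z => p.1 + p.2 • z) '' K₂ with hBf
  have hBsub : ∀ p ∈ tset, Bf p ⊆ closedBall p.1 (p.2 * r₀) := by
    rintro p ⟨-, ht0, -⟩ w ⟨z, hz, rfl⟩
    have hzr : ‖z‖ ≤ r₀ := by
      have := hUr (hK₂U hz); rwa [mem_closedBall, dist_zero_right] at this
    have : dist (p.1 + p.2 • z) p.1 = |p.2| * ‖z‖ := by
      rw [dist_self_add_left, norm_smul, Real.norm_eq_abs]
    rw [mem_closedBall, this, abs_of_nonneg ht0.le]
    exact mul_le_mul_of_nonneg_left hzr ht0.le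
  have hBvol : ∀ p : (EuclideanSpace ℝ (Fin n)) × ℝ, 0 < p.2 →
      μ (Bf p) = ENNReal.ofReal (p.2^n) * μ K₂ := fun p hp => himg_volume _ hp _
  have hμB : ∀ p ∈ tset, μ (closedBall p.1 (3 * (p.2 * r₀))) ≤ (C:ℝ≥0∞) * μ (Bf p) := by
    rintro p ⟨-, ht0, -⟩
    have h3 : (0:ℝ) ≤ 3 * (p.2 * r₀) := by positivity
    rw [MeasureTheory.Measure.addHaar_closedBall _ _ h3, finrank_euclideanSpace_fin]
    have hpow : (3 * (p.2 * r₀))^n = p.2^n * (3*r₀)^n := by rw [← mul_pow]; ring_nf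
    rw [hpow, ENNReal.ofReal_mul (by positivity), hBvol p ht0]
    calc ENNReal.ofReal (p.2^n) * ENNReal.ofReal ((3*r₀)^n) * v1
        = ENNReal.ofReal (p.2^n) * Cnum := by rw [hCnum, mul_assoc]
      _ ≤ ENNReal.ofReal (p.2^n) * ((C:ℝ≥0∞) * μ K₂) := mul_le_mul_right hCle _
      _ = (C:ℝ≥0∞) * (ENNReal.ofReal (p.2^n) * μ K₂) := by ring
  have hint : ∀ p ∈ tset, (interior (Bf p)).Nonempty := by
    rintro p ⟨-, ht0, -⟩
    have hball : ball (p.1 + p.2 • z₀) (p.2 * (δ/2)) ⊆ Bf p := by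
      intro w hw
      rw [mem_ball] at hw
      refine ⟨p.2⁻¹ • (w - p.1), ?_, ?_⟩
      · have heq : p.2⁻¹ • (w - p.1) - z₀ = p.2⁻¹ • (w - (p.1 + p.2 • z₀)) := by
          have h1 : p.2⁻¹ • (p.2 • z₀) = z₀ := by
            rw [smul_smul, inv_mul_cancel₀ ht0.ne', one_smul]
          rw [smul_sub, smul_sub, smul_add, h1]
          abel
        have hdist : dist (p.2⁻¹ • (w - p.1)) z₀ < δ/2 := by
          rw [dist_eq_norm, heq, norm_smul, Real.norm_eq_abs, abs_inv, abs_of_nonneg ht0.le,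
            ← dist_eq_norm]
          calc p.2⁻¹ * dist w (p.1 + p.2 • z₀) < p.2⁻¹ * (p.2 * (δ/2)) := by
                exact mul_lt_mul_of_pos_left hw (by positivity)
            _ = δ/2 := by field_simp
        exact Set.mem_union_right _ (ball_subset_closedBall (mem_ball.2 hdist))
      · show p.1 + p.2 • (p.2⁻¹ • (w - p.1)) = w
        rw [smul_smul, mul_inv_cancel₀ ht0.ne', one_smul]
        abel
    refine ⟨p.1 + p.2 • z₀, interior_maximal hball isOpen_ball (mem_ball_self (by positivity))⟩
  have hclosed : ∀ p ∈ tset, IsClosed (Bf p) := by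
    rintro p ⟨-, ht0, -⟩
    exact (hK₂c.image (continuous_const.add (continuous_id.const_smul p.2))).isClosed
  have hfine : ∀ x ∈ closedBall (0:EuclideanSpace ℝ (Fin n)) 1, ∀ e > (0:ℝ),
      ∃ p ∈ tset, p.2 * r₀ ≤ e ∧ p.1 = x := by
    intro x hx e he
    refine ⟨(x, min tmax (e/r₀)), ⟨hx, lt_min htmax (div_pos he hr₀), min_le_left _ _⟩, ?_, rfl⟩
    calc min tmax (e/r₀) * r₀ ≤ (e/r₀) * r₀ :=
          mul_le_mul_of_nonneg_right (min_le_right _ _) hr₀.le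
      _ = e := div_mul_cancel₀ e hr₀.ne'
  obtain ⟨u, hu_sub, hu_cnt, hu_disj, hu_cov⟩ := Vitali.exists_disjoint_covering_ae μ
    (closedBall (0:EuclideanSpace ℝ (Fin n)) 1) tset C (fun p => p.2 * r₀) (fun p => p.1)
    Bf hBsub hμB hint hclosed hfine
  have hu_t : ∀ p ∈ u, p ∈ tset := fun p hp => hu_sub hp
  set S : Set (EuclideanSpace ℝ (Fin n)) := ⋃ p ∈ u, (fun z => p.1 + p.2 • z) '' A with hS
  set G : Set (EuclideanSpace ℝ (Fin n)) := ⋃ p ∈ u, Bf p with hG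
  have hBfmeas : ∀ p ∈ u, MeasurableSet (Bf p) :=
    fun p hp => himg_measurable _ (hu_t p hp).2.1.ne' hK₂meas
  refine ⟨S, G, ?_, ?_, ?_, ?_⟩
  · exact MeasurableSet.biUnion hu_cnt (fun p hp => himg_measurable _ (hu_t p hp).2.1.ne' hAmeas)
  · -- mass bound
    have hGsub : ∀ p ∈ u, Bf p ⊆ ball (0:EuclideanSpace ℝ (Fin n)) 2 := by
      intro p hp w hw
      obtain ⟨hp1, ht0, htm⟩ := hu_t p hp
      have h1 : dist w p.1 ≤ p.2 * r₀ := hBsub p (hu_t p hp) hw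
      have h2 : p.2 * r₀ ≤ 1/2 := by
        calc p.2 * r₀ ≤ (1/(2*r₀)) * r₀ :=
              mul_le_mul_of_nonneg_right (htm.trans (min_le_right _ _)) hr₀.le
          _ = 1/2 := by field_simp
      have h3 : dist p.1 0 ≤ 1 := mem_closedBall.1 hp1
      rw [mem_ball]
      calc dist w 0 ≤ dist w p.1 + dist p.1 0 := dist_triangle _ _ _
        _ ≤ 1/2 + 1 := add_le_add (h1.trans h2) h3
        _ < 2 := by norm_num
    calc μ S ≤ ∑' p : u, μ ((fun z => (p:(EuclideanSpace ℝ (Fin n)) × ℝ).1 + p.1.2 • z) '' A) :=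
          measure_biUnion_le μ hu_cnt _
      _ ≤ ∑' p : u, 2 * (ε:ℝ≥0∞) * μ (Bf p) := by
          apply ENNReal.tsum_le_tsum
          rintro ⟨p, hp⟩
          obtain ⟨-, ht0, -⟩ := hu_t p hp
          calc μ ((fun z => p.1 + p.2 • z) '' A) = ENNReal.ofReal (p.2^n) * μ A :=
                himg_volume _ ht0 _
            _ ≤ ENNReal.ofReal (p.2^n) * ((ε:ℝ≥0∞) * (2 * μ K₂)) := by
                exact mul_le_mul_right (hAlt.le.trans (mul_le_mul_right hK₂half _)) _
            _ = 2 * (ε:ℝ≥0∞) * (ENNReal.ofReal (p.2^n) * μ K₂) := by ring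
            _ = 2 * (ε:ℝ≥0∞) * μ (Bf p) := by rw [hBvol p ht0]
      _ = 2 * (ε:ℝ≥0∞) * ∑' p : u, μ (Bf p) := ENNReal.tsum_mul_left
      _ = 2 * (ε:ℝ≥0∞) * μ G := by rw [hG, measure_biUnion hu_cnt hu_disj hBfmeas]
      _ ≤ 2 * (ε:ℝ≥0∞) * μ (ball (0:EuclideanSpace ℝ (Fin n)) 2) :=
          mul_le_mul_right (measure_mono (Set.iUnion₂_subset hGsub)) _
  · exact hu_cov
  · -- witness property
    intro x hx
    obtain ⟨p, hpu, hxB⟩ := Set.mem_iUnion₂.1 hx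
    obtain ⟨hp1, ht0, htm⟩ := hu_t p hpu
    obtain ⟨z, hzK, hxz⟩ := hxB
    have hzU : z ∈ U := hK₂U hzK
    rw [hU] at hzU
    obtain ⟨i, his, hzi⟩ := Set.mem_iUnion₂.1 hzU
    set W : Set (EuclideanSpace ℝ (Fin n)) := (fun z => p.1 + p.2 • z) '' (i : Set (EuclideanSpace ℝ (Fin n))) with hW
    obtain ⟨y', hy'⟩ := hhom i i.2.1 p.1 p.2 ht0
    have hxW : x ∈ W := ⟨z, hzi, hxz⟩
    have hWx : W ∈ 𝓑 x := h𝓑.feller x y' W hy' hxW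
    have hiU : (i : Set (EuclideanSpace ℝ (Fin n))) ⊆ U := by
      rw [hU]; exact Set.subset_biUnion_of_mem his
    have hWdiam : diam W < d := by
      have h2 : diam (i : Set (EuclideanSpace ℝ (Fin n))) ≤ 2 * r₀ := by
        exact (diam_mono (hiU.trans hUr) isBounded_closedBall).trans (diam_closedBall hr₀.le)
      have h3 : d / (2*r₀+1) * (2*r₀) < d := by
        have h4 := mul_lt_mul_of_pos_left (show 2*r₀ < 2*r₀+1 by linarith)
          (div_pos hd (by linarith : (0:ℝ) < 2*r₀+1))
        rwa [div_mul_cancel₀ d (by linarith : (2*r₀+1) ≠ 0)] at h4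
      calc diam W ≤ p.2 * diam (i : Set (EuclideanSpace ℝ (Fin n))) :=
            himg_diam _ ht0.le (collBounded i i.2)
        _ ≤ p.2 * (2*r₀) := mul_le_mul_of_nonneg_left h2 ht0.le
        _ ≤ (d / (2*r₀+1)) * (2*r₀) :=
            mul_le_mul_of_nonneg_right (htm.trans (min_le_left _ _)) (by positivity)
        _ < d := h3
    have hWvol : μ W = ENNReal.ofReal (p.2^n) * μ (i : Set (EuclideanSpace ℝ (Fin n))) :=
      himg_volume _ ht0 _
    have hifin : μ (i : Set (EuclideanSpace ℝ (Fin n))) < ⊤ :=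
      lt_of_le_of_lt (measure_mono hiU) hUfin
    have hofR : ENNReal.ofReal (p.2^n) ≠ 0 := by
      simp only [ne_eq, ENNReal.ofReal_eq_zero, not_le]; positivity
    refine ⟨W, hWx, hWdiam, ?_, ?_, ?_⟩
    · rw [hWvol]; exact ENNReal.mul_pos hofR (collPos i i.2).ne'
    · rw [hWvol]; exact ENNReal.mul_lt_top ENNReal.ofReal_lt_top hifin
    · have hsub : (fun z => p.1 + p.2 • z) '' (A ∩ (i : Set (EuclideanSpace ℝ (Fin n)))) ⊆ S ∩ W := by
        apply Set.subset_inter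
        · exact (Set.image_mono Set.inter_subset_left).trans
            (Set.subset_biUnion_of_mem
              (u := fun p : (EuclideanSpace ℝ (Fin n)) × ℝ => (fun z => p.1 + p.2 • z) '' A) hpu)
        · exact Set.image_mono Set.inter_subset_right
      have hAi : A ∩ (i : Set (EuclideanSpace ℝ (Fin n))) = E ∩ (i : Set (EuclideanSpace ℝ (Fin n))) := by
        rw [hA, Set.inter_assoc, Set.inter_eq_self_of_subset_right hiU]
      calc ENNReal.ofReal γ * μ W
          = ENNReal.ofReal (p.2^n) * (ENNReal.ofReal γ * μ (i : Set (EuclideanSpace ℝ (Fin n)))) := by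
            rw [hWvol]; ring
        _ ≤ ENNReal.ofReal (p.2^n) * μ (E ∩ (i : Set (EuclideanSpace ℝ (Fin n)))) :=
            mul_le_mul_right i.2.2 _
        _ = μ ((fun z => p.1 + p.2 • z) '' (A ∩ (i : Set (EuclideanSpace ℝ (Fin n))))) := by
            rw [himg_volume _ ht0, hAi]
        _ ≤ μ (S ∩ W) := measure_mono hsub

end Stage

section Halo
open Bornology

theorem halo_bound {n : ℕ} (𝓑 : EuclideanSpace ℝ (Fin n) → Set (Set (EuclideanSpace ℝ (Fin n))))
    (h𝓑 : IsBFBasis volume 𝓑) (hhom : HomInv 𝓑) (hdens : IsDensityBasis volume 𝓑)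
    {γ : ℝ} (hγ0 : 0 < γ) :
    ∃ C : ℝ≥0, 0 < C ∧ ∀ E : Set (EuclideanSpace ℝ (Fin n)), MeasurableSet E →
      volume (haloSet 𝓑 γ E) ≤ C * volume E := by
  by_contra hcon
  push_neg at hcon
  set μ : Measure (EuclideanSpace ℝ (Fin n)) := volume with hμdef
  set Q := closedBall (0 : EuclideanSpace ℝ (Fin n)) 1 with hQ
  set V2 := μ (ball (0 : EuclideanSpace ℝ (Fin n)) 2) with hV2
  have hQpos : 0 < μ Q := measure_closedBall_pos μ _ one_pos
  have hV2fin : V2 ≠ ⊤ := (lt_of_le_of_lt (measure_mono ball_subset_closedBall)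
    (isCompact_closedBall _ _).measure_lt_top).ne
  have h4V2 : 4 * V2 ≠ ⊤ := ENNReal.mul_ne_top (by norm_num) hV2fin
  obtain ⟨c, hc0, hc⟩ := ENNReal.exists_nnreal_pos_mul_lt h4V2 hQpos.ne'
  set ε : ℕ → ℝ≥0 := fun k => c * 2⁻¹ ^ (k+1) with hε
  have hεpos : ∀ k, 0 < ε k := fun k => mul_pos hc0 (pow_pos (by norm_num) _)
  have hεeq : ∀ k : ℕ, 2 * ε k = c * 2⁻¹ ^ k := by
    intro k
    have h1 : (2:ℝ≥0) * 2⁻¹ = 1 := mul_inv_cancel₀ (by norm_num)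
    calc (2:ℝ≥0) * (c * 2⁻¹^(k+1)) = (2*2⁻¹) * (c * 2⁻¹^k) := by rw [pow_succ]; ring
      _ = c * 2⁻¹^k := by rw [h1, one_mul]
  have main : ∀ k : ℕ, ∃ S G : Set (EuclideanSpace ℝ (Fin n)), MeasurableSet S ∧
      μ S ≤ 2 * (ε k : ℝ≥0∞) * V2 ∧ μ (Q \ G) = 0 ∧
      ∀ x ∈ G, ∃ W ∈ 𝓑 x, diam W < (2⁻¹:ℝ)^k ∧ 0 < μ W ∧ μ W < ⊤ ∧
        ENNReal.ofReal γ * μ W ≤ μ (S ∩ W) := by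
    intro k
    obtain ⟨E, hEmeas, hElt⟩ := hcon (ε k)⁻¹ (by positivity)
    have hfail : ((ε k : ℝ≥0∞))⁻¹ * μ E < μ (haloSet 𝓑 γ E) := by
      rwa [ENNReal.coe_inv (hεpos k).ne'] at hElt
    exact buildStage 𝓑 h𝓑 hhom hγ0 hEmeas (hεpos k) hfail (by positivity)
  choose S G hSmeas hSle hGcov hGwit using main
  set A := ⋃ k, S k with hA
  have hAmeas : MeasurableSet A := MeasurableSet.iUnion hSmeas
  have hAlt : μ A < μ Q := by
    have h1 : μ A ≤ ∑' k, μ (S k) := measure_iUnion_le _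
    have h2 : ∀ k : ℕ, μ (S k) ≤ ((c:ℝ≥0∞) * V2) * (2⁻¹ : ℝ≥0∞)^k := by
      intro k
      refine (hSle k).trans (le_of_eq ?_)
      have e1 : (2:ℝ≥0∞) * (ε k : ℝ≥0∞) = ((2 * ε k : ℝ≥0) : ℝ≥0∞) := by push_cast; ring
      rw [e1, hεeq k]
      push_cast
      ring
    have h3 : ∑' k, μ (S k) ≤ ((c:ℝ≥0∞) * V2) * ∑' k : ℕ, (2⁻¹ : ℝ≥0∞)^k :=
      (ENNReal.tsum_le_tsum h2).trans (le_of_eq ENNReal.tsum_mul_left)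
    have h4 : ∑' k : ℕ, (2⁻¹ : ℝ≥0∞)^k = 2 := by
      rw [ENNReal.tsum_geometric, ENNReal.one_sub_inv_two, inv_inv]
    have h5 : μ A ≤ (c:ℝ≥0∞) * (2 * V2) := by
      calc μ A ≤ ((c:ℝ≥0∞) * V2) * 2 := h1.trans (h3.trans_eq (by rw [h4]))
        _ = (c:ℝ≥0∞) * (2 * V2) := by ring
    calc μ A ≤ (c:ℝ≥0∞) * (2 * V2) := h5
      _ ≤ (c:ℝ≥0∞) * (4 * V2) := by
          exact mul_le_mul_right (mul_le_mul_left (by norm_num) _) _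
      _ < μ Q := hc
  have hae := hdens A hAmeas
  have hZ0 : μ {x | ¬ BasisLim 𝓑 x (fun B => (μ (A ∩ B) / μ B).toReal)
      (A.indicator (fun _ => (1:ℝ)) x)} = 0 := ae_iff.1 hae
  set N := {x | ¬ BasisLim 𝓑 x (fun B => (μ (A ∩ B) / μ B).toReal)
      (A.indicator (fun _ => (1:ℝ)) x)} ∪ ⋃ k, (Q \ G k) with hN
  have hN0 : μ N = 0 := measure_union_null hZ0 (measure_iUnion_null hGcov)
  have hex : ∃ x, x ∈ Q ∧ x ∉ A ∧ x ∉ N := by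
    by_contra hno
    push_neg at hno
    have hsub : Q ⊆ A ∪ N := by
      intro x hx
      by_cases hxA : x ∈ A
      · exact Or.inl hxA
      · exact Or.inr (hno x hx hxA)
    have hle : μ Q ≤ μ A + μ N := (measure_mono hsub).trans (measure_union_le _ _)
    rw [hN0, add_zero] at hle
    exact absurd hle hAlt.not_ge
  obtain ⟨x, hxQ, hxA, hxN⟩ := hex
  have hxZ : ¬ ¬ BasisLim 𝓑 x (fun B => (μ (A ∩ B) / μ B).toReal)
      (A.indicator (fun _ => (1:ℝ)) x) := fun h => hxN (Or.inl h)
  have hxG : ∀ k, x ∈ G k := by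
    intro k
    by_contra hxg
    exact hxN (Or.inr (Set.mem_iUnion.2 ⟨k, ⟨hxQ, hxg⟩⟩))
  have hBL : BasisLim 𝓑 x (fun B => (μ (A ∩ B) / μ B).toReal) 0 := by
    have h := not_not.1 hxZ
    rwa [Set.indicator_of_notMem hxA] at h
  obtain ⟨δ, hδ0, hδ⟩ := hBL (γ/2) (by linarith)
  obtain ⟨k, hk⟩ := exists_pow_lt_of_lt_one hδ0 (by norm_num : (2⁻¹:ℝ) < 1)
  obtain ⟨W, hWmem, hWdiam, hWpos, hWfin, hWest⟩ := hGwit k x (hxG k)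
  have hratio := hδ W hWmem (hWdiam.trans hk)
  rw [sub_zero] at hratio
  have hAWfin : μ (A ∩ W) ≠ ⊤ :=
    (lt_of_le_of_lt (measure_mono Set.inter_subset_right) hWfin).ne
  have hger : γ ≤ (μ (A ∩ W) / μ W).toReal := by
    have hle : ENNReal.ofReal γ ≤ μ (A ∩ W) / μ W := by
      rw [ENNReal.le_div_iff_mul_le (Or.inl hWpos.ne') (Or.inl hWfin.ne)]
      exact hWest.trans (measure_mono (Set.inter_subset_inter (Set.subset_iUnion S k)
        Set.Subset.rfl))
    calc γ = (ENNReal.ofReal γ).toReal := (ENNReal.toReal_ofReal hγ0.le).symm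
      _ ≤ (μ (A ∩ W) / μ W).toReal :=
          ENNReal.toReal_mono (ENNReal.div_lt_top hAWfin hWpos.ne').ne hle
  have hfin2 := lt_of_le_of_lt hger (lt_of_le_of_lt (le_abs_self _) hratio)
  linarith

end Halo


/-- a homothecy invariant Busemann–Feller density basis on `ℝⁿ` satisfies the
weak-type estimate `|{M^γ_𝓑 f > λ}| ≤ C |{|f| > λ}|` for all `f ∈ L⁰` and `λ > 0`. -/
theorem stmt11 (n : ℕ)
    (𝓑 : EuclideanSpace ℝ (Fin n) → Set (Set (EuclideanSpace ℝ (Fin n))))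
    (h𝓑 : IsBFBasis volume 𝓑) (hhom : HomInv 𝓑)
    (hdens : IsDensityBasis volume 𝓑)
    (γ : ℝ) (hγ0 : 0 < γ) (hγ1 : γ < 1) :
    ∃ C : ℝ≥0, 0 < C ∧ ∀ f : EuclideanSpace ℝ (Fin n) → EReal, MemL0 volume f →
      ∀ lam : ℝ, 0 < lam →
        volume {x | (lam : EReal) < medMax volume 𝓑 f γ x} ≤
          C * volume {x | (lam : EReal) < max (f x) (-f x)} := by
  obtain ⟨C, hC0, hC⟩ := halo_bound 𝓑 h𝓑 hhom hdens hγ0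
  refine ⟨C, hC0, ?_⟩
  intro f hf lam hlam
  set g : EuclideanSpace ℝ (Fin n) → EReal := fun z => max (f z) (-f z) with hg
  have hgmeas : Measurable g := hf.1.max hf.1.neg
  have hg0 : ∀ z, (0 : EReal) ≤ g z := by
    intro z
    rcases le_total 0 (f z) with h | h
    · exact h.trans (le_max_left _ _)
    · have : (0:EReal) ≤ -f z := by
        rw [show (0:EReal) = -0 by simp]
        exact EReal.neg_le_neg_iff.2 h
      exact this.trans (le_max_right _ _)
  set E : Set (EuclideanSpace ℝ (Fin n)) := {x | (lam : EReal) < g x} with hE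
  have hEmeas : MeasurableSet E := measurableSet_lt measurable_const hgmeas
  have hsub : {x | (lam : EReal) < medMax volume 𝓑 f γ x} ⊆ haloSet 𝓑 γ E := by
    intro x hx
    rw [Set.mem_setOf_eq, medMax, lt_iSup_iff] at hx
    obtain ⟨B, hx⟩ := hx
    rw [lt_iSup_iff] at hx
    obtain ⟨hBy, hx⟩ := hx
    rw [lt_iSup_iff] at hx
    obtain ⟨hxB, hx⟩ := hx
    have hmed : lam < med volume g B γ := EReal.coe_lt_coe_iff.1 hx
    -- lam is not in the defining set of the median
    have hnot : ¬ (volume {z ∈ B | (lam : EReal) < g z} <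
        ENNReal.ofReal γ * volume B) := by
      intro hmem
      have hbdd : BddBelow {a : ℝ | volume {z ∈ B | (a : EReal) < g z} <
          ENNReal.ofReal γ * volume B} := by
        refine ⟨0, fun a ha => ?_⟩
        by_contra hneg
        push_neg at hneg
        have hall : {z ∈ B | (a : EReal) < g z} = B := by
          ext z
          simp only [Set.mem_setOf_eq, Set.mem_sep_iff, and_iff_left_iff_imp]
          intro _
          refine lt_of_lt_of_le ?_ (hg0 z)
          exact_mod_cast (by exact_mod_cast hneg : (a:EReal) < ((0:ℝ):EReal))
        simp only [Set.mem_setOf_eq] at ha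
        rw [hall] at ha
        have hle1 : ENNReal.ofReal γ * volume B ≤ volume B := by
          calc ENNReal.ofReal γ * volume B ≤ 1 * volume B :=
                mul_le_mul_left (ENNReal.ofReal_le_one.2 hγ1.le) _
            _ = volume B := one_mul _
        exact absurd (lt_of_lt_of_le ha hle1) (lt_irrefl _)
      have : med volume g B γ ≤ lam := csInf_le hbdd hmem
      exact absurd hmed this.not_gt
    push_neg at hnot
    have hEB : {z ∈ B | (lam : EReal) < g z} = E ∩ B := by
      ext z
      simp only [Set.mem_sep_iff, Set.mem_inter_iff, hE, Set.mem_setOf_eq]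
      tauto
    rw [hEB] at hnot
    exact ⟨B, ⟨hBy, hnot⟩, hxB⟩
  exact (measure_mono hsub).trans (hC E hEmeas)
end

section
/- Let X be a separable metric measure space, let 𝓑 be a Busemann–Feller basis on X, let 0 < s ≤ 1 and 1 < p < ∞, and let Cap be the M^{s,p}-capacity. Consider the claims: (1) for every 0 < γ < 1 and every u ∈ M^{s,p}(X), Cap({x ∈ X : M^γ_𝓑 u(x) > λ}) → 0 as λ → ∞; (2) for every 0 < γ < 1, every λ > 0, and every sequence (u_k) in M^{s,p}(X) with ‖u_k‖_{M^{s,p}} → 0, we have Cap({x ∈ X : M^γ_𝓑 u_k(x) > λ}) → 0 as k → ∞; (3) for every quasicontinuous u ∈ M^{s,p}(X) there exists a set E with Cap(E) = 0 such that lim_{𝓑∋B→x} m^γ_u(B) = u(x) for every 0 < γ < 1 and every x ∈ X∖E. Then (1) implies (2), and (2) implies (3). -/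
open MeasureTheory Metric Filter Set Topology
open scoped ENNReal NNReal

/-- `g` is an `s`-gradient of `u`:
`|u(x) − u(y)| ≤ d(x,y)^s (g(x) + g(y))` for all `x, y` outside a null set. -/
def IsSGrad {X : Type*} [MetricSpace X] [MeasurableSpace X] (μ : Measure X) (s : ℝ)
    (u : X → ℝ) (g : X → ℝ≥0∞) : Prop :=
  Measurable g ∧ ∃ E : Set X, μ E = 0 ∧ ∀ x ∉ E, ∀ y ∉ E,
    ENNReal.ofReal |u x - u y| ≤ ENNReal.ofReal (dist x y ^ s) * (g x + g y)

/-- The Hajłasz norm `‖u‖_{M^{s,p}} = ‖u‖_{L^p} + inf_{g ∈ D^s(u)} ‖g‖_{L^p}`. -/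
noncomputable def hajNorm {X : Type*} [MetricSpace X] [MeasurableSpace X] (μ : Measure X)
    (s p : ℝ) (u : X → ℝ) : ℝ≥0∞ :=
  (∫⁻ x, ENNReal.ofReal |u x| ^ p ∂μ) ^ (1 / p) +
    ⨅ (g : X → ℝ≥0∞) (_ : IsSGrad μ s u g), (∫⁻ x, g x ^ p ∂μ) ^ (1 / p)

/-- `u ∈ M^{s,p}(X)`: the Hajłasz space. -/
def MemHaj {X : Type*} [MetricSpace X] [MeasurableSpace X] (μ : Measure X)
    (s p : ℝ) (u : X → ℝ) : Prop :=
  Measurable u ∧ hajNorm μ s p u < ⊤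

/-- The `M^{s,p}`-capacity: `Cap(E) = inf {‖u‖_{M^{s,p}}^p : u ≥ 1 on an open nbhd of E}`. -/
noncomputable def hCap {X : Type*} [MetricSpace X] [MeasurableSpace X] (μ : Measure X)
    (s p : ℝ) (E : Set X) : ℝ≥0∞ :=
  ⨅ (u : X → ℝ) (_ : MemHaj μ s p u)
    (_ : ∃ U : Set X, IsOpen U ∧ E ⊆ U ∧ ∀ x ∈ U, 1 ≤ u x),
    hajNorm μ s p u ^ p

/-- `u` is quasicontinuous w.r.t. the `M^{s,p}`-capacity. -/
def QuasiCont {X : Type*} [MetricSpace X] [MeasurableSpace X] (μ : Measure X)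
    (s p : ℝ) (u : X → ℝ) : Prop :=
  ∀ ε : ℝ, 0 < ε → ∃ F : Set X, hCap μ s p F < ENNReal.ofReal ε ∧ ContinuousOn u Fᶜ


/-! ### Auxiliary development -/

section Aux
open scoped Pointwise
set_option linter.unusedSectionVars false

variable {X : Type*} [MetricSpace X] [MeasurableSpace X] [BorelSpace X]

/-- The real-valued median set. -/
def mset (μ : Measure X) (w : X → ℝ) (B : Set X) (γ : ℝ) : Set ℝ :=
  {a : ℝ | μ {x ∈ B | a < w x} < ENNReal.ofReal γ * μ B}

/-- The real-valued median. -/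
noncomputable def rmed (μ : Measure X) (w : X → ℝ) (B : Set X) (γ : ℝ) : ℝ :=
  sInf (mset μ w B γ)

lemma med_coe (μ : Measure X) (w : X → ℝ) (B : Set X) (γ : ℝ) :
    med μ (fun z => (w z : EReal)) B γ = rmed μ w B γ := by
  unfold med rmed mset
  congr 1
  ext a
  simp [EReal.coe_lt_coe_iff]

lemma med_abs (μ : Measure X) (w : X → ℝ) (B : Set X) (γ : ℝ) :
    med μ (fun z => max ((w z : ℝ) : EReal) (-((w z : ℝ) : EReal))) B γ
      = rmed μ (fun z => |w z|) B γ := by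
  rw [← med_coe]
  have : (fun z => max ((w z : ℝ) : EReal) (-((w z : ℝ) : EReal)))
      = fun z => ((|w z| : ℝ) : EReal) := by
    funext z
    rw [abs_eq_max_neg, EReal.coe_strictMono.monotone.map_max, EReal.coe_neg]
  rw [this]

lemma mset_nonempty {μ : Measure X} {w : X → ℝ} {B : Set X} {γ : ℝ}
    (hw : Measurable w) (hB : MeasurableSet B) (hfin : μ B ≠ ⊤)
    (hpos : 0 < ENNReal.ofReal γ * μ B) : (mset μ w B γ).Nonempty := by
  set t : ℕ → Set X := fun n => {x ∈ B | (n : ℝ) < w x} with ht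
  have hmeas : ∀ n, MeasurableSet (t n) := fun n =>
    hB.inter (measurableSet_lt measurable_const hw)
  have hanti : Antitone t := by
    intro m n hmn x hx
    exact ⟨hx.1, lt_of_le_of_lt (by exact_mod_cast Nat.cast_le.2 hmn) hx.2⟩
  have hempty : ⋂ n, t n = ∅ := by
    ext x
    simp only [Set.mem_iInter, Set.mem_empty_iff_false, iff_false, not_forall]
    obtain ⟨n, hn⟩ := exists_nat_gt (w x)
    exact ⟨n, fun hmem => absurd hmem.2 (not_lt.2 hn.le)⟩
  have htend : Tendsto (fun n => μ (t n)) atTop (𝓝 0) := by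
    have := tendsto_measure_iInter_atTop (μ := μ)
      (fun n => (hmeas n).nullMeasurableSet) hanti
      ⟨0, by exact ne_top_of_le_ne_top hfin (measure_mono (fun x hx => hx.1))⟩
    rw [hempty] at this
    rwa [measure_empty] at this
  obtain ⟨n, hn⟩ := (htend.eventually_lt_const hpos).exists
  exact ⟨(n : ℝ), hn⟩

lemma mset_bddBelow {μ : Measure X} {w : X → ℝ} {B : Set X} {γ : ℝ}
    (hlt : ENNReal.ofReal γ * μ B < μ B) : BddBelow (mset μ w B γ) := by
  set t : ℕ → Set X := fun n => {x ∈ B | -(n : ℝ) < w x} with ht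
  have hmono : Monotone t := by
    intro m n hmn x hx
    refine ⟨hx.1, lt_of_le_of_lt ?_ hx.2⟩
    simp only [neg_le_neg_iff]
    exact_mod_cast hmn
  have hunion : ⋃ n, t n = B := by
    ext x
    simp only [Set.mem_iUnion]
    constructor
    · rintro ⟨n, hn⟩; exact hn.1
    · intro hx
      obtain ⟨n, hn⟩ := exists_nat_gt (-(w x))
      exact ⟨n, hx, by linarith⟩
  have htend : Tendsto (fun n => μ (t n)) atTop (𝓝 (μ B)) := by
    have := tendsto_measure_iUnion_atTop (μ := μ) hmono
    rw [hunion] at this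
    exact this
  obtain ⟨N, hN⟩ := (htend.eventually_const_lt hlt).exists
  refine ⟨-(N : ℝ), fun a ha => ?_⟩
  by_contra hcon
  push_neg at hcon
  have hsub : t N ⊆ {x ∈ B | a < w x} := fun x hx => ⟨hx.1, lt_trans hcon hx.2⟩
  exact absurd (lt_of_lt_of_le hN (measure_mono hsub)) (not_lt.2 ha.le)

lemma rmed_le_of_mem {μ : Measure X} {w : X → ℝ} {B : Set X} {γ : ℝ} {a : ℝ}
    (hbdd : BddBelow (mset μ w B γ)) (ha : a ∈ mset μ w B γ) : rmed μ w B γ ≤ a :=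
  csInf_le hbdd ha

lemma le_rmed {μ : Measure X} {w : X → ℝ} {B : Set X} {γ : ℝ} {b : ℝ}
    (hne : (mset μ w B γ).Nonempty) (h : ∀ a ∈ mset μ w B γ, b ≤ a) : b ≤ rmed μ w B γ :=
  le_csInf hne h

lemma mset_anti {μ : Measure X} {w w' : X → ℝ} {B : Set X} {γ : ℝ}
    (h : ∀ᵐ x ∂μ, w x ≤ w' x) : mset μ w' B γ ⊆ mset μ w B γ := by
  intro a ha
  refine lt_of_le_of_lt (measure_mono_ae ?_) ha
  filter_upwards [h] with x hx
  exact fun hmem => ⟨hmem.1, lt_of_lt_of_le hmem.2 hx⟩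

lemma rmed_mono {μ : Measure X} {w w' : X → ℝ} {B : Set X} {γ : ℝ}
    (h : ∀ᵐ x ∂μ, w x ≤ w' x) (hbdd : BddBelow (mset μ w B γ))
    (hne : (mset μ w' B γ).Nonempty) : rmed μ w B γ ≤ rmed μ w' B γ :=
  csInf_le_csInf hbdd hne (mset_anti h)

lemma rmed_smul (μ : Measure X) (w : X → ℝ) (B : Set X) (γ : ℝ) {c : ℝ} (hc : 0 < c) :
    rmed μ (fun x => c * w x) B γ = c * rmed μ w B γ := by
  have hset : mset μ (fun x => c * w x) B γ = c • mset μ w B γ := by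
    ext a
    rw [Set.mem_smul_set_iff_inv_smul_mem₀ (ne_of_gt hc)]
    unfold mset
    simp only [Set.mem_setOf_eq, smul_eq_mul]
    have : ∀ x, (a < c * w x) ↔ (c⁻¹ * a < w x) := by
      intro x
      rw [inv_mul_lt_iff₀ hc]
    simp only [this]
  rw [rmed, rmed, hset, Real.sInf_smul_of_nonneg hc.le, smul_eq_mul]

lemma gamma_mul_lt {μ : Measure X} {B : Set X} {γ : ℝ} (hγ1 : γ < 1)
    (h0 : μ B ≠ 0) (hfin : μ B ≠ ⊤) : ENNReal.ofReal γ * μ B < μ B := by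
  conv_rhs => rw [← one_mul (μ B)]
  refine ENNReal.mul_lt_mul_left h0 hfin ?_
  exact ENNReal.ofReal_lt_one.2 hγ1

/-- Basic facts about basis sets. -/
lemma basis_facts {μ : Measure X}
    (hball : ∀ (x : X) (r : ℝ), 0 < r → 0 < μ (ball x r) ∧ μ (ball x r) < ⊤)
    {𝓑 : X → Set (Set X)} (h𝓑 : IsBFBasis μ 𝓑) {B : Set X} {y : X} (hB : B ∈ 𝓑 y) :
    MeasurableSet B ∧ 0 < μ B ∧ μ B < ⊤ := by
  refine ⟨h𝓑.measurableSet y B hB, h𝓑.pos y B hB, ?_⟩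
  obtain ⟨r, hr⟩ := (h𝓑.bounded y B hB).subset_closedBall y
  have hy : y ∈ B := h𝓑.mem_of y B hB
  have hr0 : 0 ≤ r := by
    have := hr hy
    simpa [Metric.mem_closedBall] using this
  have hsub : B ⊆ ball y (r + 1) :=
    hr.trans (Metric.closedBall_subset_ball (by linarith))
  exact lt_of_le_of_lt (measure_mono hsub) (hball y (r + 1) (by linarith)).2

lemma lt_medMax_iff {μ : Measure X} {𝓑 : X → Set (Set X)} {u : X → ℝ} {γ lam : ℝ} {x : X} :
    (lam : EReal) < medMax μ 𝓑 (fun z => (u z : EReal)) γ x ↔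
      ∃ B : Set X, (∃ y, B ∈ 𝓑 y) ∧ x ∈ B ∧ lam < rmed μ (fun z => |u z|) B γ := by
  unfold medMax
  simp only [lt_iSup_iff, med_abs, EReal.coe_lt_coe_iff, exists_prop]

lemma coe_rmed_le_medMax {μ : Measure X} {𝓑 : X → Set (Set X)} {u : X → ℝ} {γ : ℝ}
    {x : X} {B : Set X} (hB : ∃ y, B ∈ 𝓑 y) (hx : x ∈ B) :
    ((rmed μ (fun z => |u z|) B γ : ℝ) : EReal) ≤ medMax μ 𝓑 (fun z => (u z : EReal)) γ x := by
  unfold medMax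
  refine le_trans ?_ (le_iSup _ B)
  refine le_trans ?_ (le_iSup _ hB)
  refine le_trans ?_ (le_iSup _ hx)
  rw [med_abs]

/-! ### Capacity lemmas -/

lemma hCap_le_test {μ : Measure X} {s p : ℝ} {E U : Set X} {v : X → ℝ}
    (hv : MemHaj μ s p v) (hU : IsOpen U) (hEU : E ⊆ U) (h1 : ∀ x ∈ U, 1 ≤ v x) :
    hCap μ s p E ≤ hajNorm μ s p v ^ p := by
  unfold hCap
  exact iInf_le_of_le v (iInf_le_of_le hv (iInf_le_of_le ⟨U, hU, hEU, h1⟩ le_rfl))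

lemma hCap_mono {μ : Measure X} {s p : ℝ} {E F : Set X} (h : E ⊆ F) :
    hCap μ s p E ≤ hCap μ s p F := by
  refine le_iInf fun v => le_iInf fun hv => le_iInf fun hU => ?_
  obtain ⟨U, h1, h2, h3⟩ := hU
  exact hCap_le_test hv h1 (h.trans h2) h3

lemma hCap_lt_iff {μ : Measure X} {s p : ℝ} {E : Set X} {c : ℝ≥0∞} :
    hCap μ s p E < c ↔ ∃ v : X → ℝ, MemHaj μ s p v ∧
      (∃ U : Set X, IsOpen U ∧ E ⊆ U ∧ ∀ x ∈ U, 1 ≤ v x) ∧ hajNorm μ s p v ^ p < c := by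
  unfold hCap
  simp only [iInf_lt_iff]
  tauto

/-! ### rpow helpers -/

lemma rpow_root_le {p : ℝ} (hp0 : 0 < p) {a b : ℝ≥0∞} (h : a ^ p ≤ b) :
    a ≤ b ^ (1 / p) := by
  have : a = (a ^ p) ^ (1 / p) := by
    rw [← ENNReal.rpow_mul, mul_one_div_cancel (ne_of_gt hp0), ENNReal.rpow_one]
  rw [this]
  exact ENNReal.rpow_le_rpow h (by positivity)

lemma rpow_root_pow {p : ℝ} (hp0 : p ≠ 0) (b : ℝ≥0∞) : (b ^ (1 / p)) ^ p = b := by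
  rw [← ENNReal.rpow_mul, one_div_mul_cancel hp0, ENNReal.rpow_one]

/-! ### Gradient lemmas -/

lemma IsSGrad.abs' {μ : Measure X} {s : ℝ} {u : X → ℝ} {g : X → ℝ≥0∞}
    (h : IsSGrad μ s u g) : IsSGrad μ s (fun x => |u x|) g := by
  obtain ⟨hmeas, E, hE, hineq⟩ := h
  refine ⟨hmeas, E, hE, fun x hx y hy => ?_⟩
  refine le_trans (ENNReal.ofReal_le_ofReal (abs_abs_sub_abs_le_abs_sub _ _)) (hineq x hx y hy)

lemma IsSGrad.max' {μ : Measure X} {s : ℝ} {u v : X → ℝ} {g h : X → ℝ≥0∞}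
    (hu : IsSGrad μ s u g) (hv : IsSGrad μ s v h) :
    IsSGrad μ s (fun x => max (u x) (v x)) (fun x => g x + h x) := by
  obtain ⟨hgm, E1, hE1, h1⟩ := hu
  obtain ⟨hhm, E2, hE2, h2⟩ := hv
  refine ⟨hgm.add hhm, E1 ∪ E2, measure_union_null hE1 hE2, fun x hx y hy => ?_⟩
  have hx1 : x ∉ E1 := fun h => hx (Set.mem_union_left _ h)
  have hx2 : x ∉ E2 := fun h => hx (Set.mem_union_right _ h)
  have hy1 : y ∉ E1 := fun h => hy (Set.mem_union_left _ h)
  have hy2 : y ∉ E2 := fun h => hy (Set.mem_union_right _ h)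
  refine le_trans (ENNReal.ofReal_le_ofReal (abs_max_sub_max_le_max _ _ _ _)) ?_
  rcases max_cases |u x - u y| |v x - v y| with ⟨heq, _⟩ | ⟨heq, _⟩ <;> rw [heq]
  · refine le_trans (h1 x hx1 y hy1) ?_
    rw [mul_add, mul_add]
    gcongr <;> simp [le_add_right, le_refl]
  · refine le_trans (h2 x hx2 y hy2) ?_
    rw [mul_add, mul_add]
    gcongr <;> simp [le_add_right, le_refl]

lemma IsSGrad.const_smul' {μ : Measure X} {s : ℝ} {u : X → ℝ} {g : X → ℝ≥0∞}
    {c : ℝ} (hc : 0 ≤ c) (h : IsSGrad μ s u g) :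
    IsSGrad μ s (fun x => c * u x) (fun x => ENNReal.ofReal c * g x) := by
  obtain ⟨hmeas, E, hE, hineq⟩ := h
  refine ⟨measurable_const.mul hmeas, E, hE, fun x hx y hy => ?_⟩
  have : |c * u x - c * u y| = c * |u x - u y| := by
    rw [← mul_sub, abs_mul, abs_of_nonneg hc]
  rw [this, ENNReal.ofReal_mul hc]
  calc ENNReal.ofReal c * ENNReal.ofReal |u x - u y|
      ≤ ENNReal.ofReal c * (ENNReal.ofReal (dist x y ^ s) * (g x + g y)) := by
        gcongr
        exact hineq x hx y hy
    _ = ENNReal.ofReal (dist x y ^ s) * (ENNReal.ofReal c * g x + ENNReal.ofReal c * g y) := by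
        ring


/-! ### Minkowski inequality for sums -/

lemma rpow_iSup (a : ℕ → ℝ≥0∞) (ha : Monotone a) {q : ℝ} (hq : 0 ≤ q) :
    (⨆ n, a n) ^ q = ⨆ n, a n ^ q := by
  refine le_antisymm ?_ (iSup_le fun n => ENNReal.rpow_le_rpow (le_iSup a n) hq)
  have h1 : Tendsto a atTop (𝓝 (⨆ n, a n)) := tendsto_atTop_iSup ha
  have h2 : Tendsto (fun n => a n ^ q) atTop (𝓝 ((⨆ n, a n) ^ q)) :=
    (ENNReal.continuous_rpow_const.tendsto _).comp h1
  exact le_of_tendsto' h2 fun n => le_iSup (fun n => a n ^ q) n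

lemma mink {μ : Measure X} {p : ℝ} (hp : 1 ≤ p) (f : ℕ → X → ℝ≥0∞)
    (hf : ∀ j, Measurable (f j)) :
    (∫⁻ x, (∑' j, f j x) ^ p ∂μ) ^ (1 / p) ≤ ∑' j, (∫⁻ x, f j x ^ p ∂μ) ^ (1 / p) := by
  have hp0 : (0 : ℝ) < p := lt_of_lt_of_le one_pos hp
  set F : ℕ → X → ℝ≥0∞ := fun n x => ∑ j ∈ Finset.range n, f j x with hF
  have hFmeas : ∀ n, Measurable (F n) := fun n =>
    Finset.measurable_sum _ fun j _ => hf j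
  have hFmono : ∀ x, Monotone fun n => F n x := fun x m n h =>
    Finset.sum_le_sum_of_subset (Finset.range_subset_range.2 h)
  have hfin : ∀ n, (∫⁻ x, F n x ^ p ∂μ) ^ (1 / p) ≤
      ∑ j ∈ Finset.range n, (∫⁻ x, f j x ^ p ∂μ) ^ (1 / p) := by
    intro n
    induction n with
    | zero =>
      have h0 : (0 : ℝ≥0∞) ^ p = 0 := ENNReal.zero_rpow_of_pos hp0
      have h1 : (0 : ℝ≥0∞) ^ (1 / p) = 0 := ENNReal.zero_rpow_of_pos (by positivity)
      simp [hF, h0, h1]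
      try exact hp0
    | succ n ih =>
      have heq : ∀ x, F (n + 1) x = ((fun x => F n x) + fun x => f n x) x := by
        intro x
        simp [hF, Finset.sum_range_succ]
      calc (∫⁻ x, F (n + 1) x ^ p ∂μ) ^ (1 / p)
          = (∫⁻ x, ((fun x => F n x) + fun x => f n x) x ^ p ∂μ) ^ (1 / p) := by
            congr 1
            exact lintegral_congr fun x => by rw [heq x]
        _ ≤ (∫⁻ x, F n x ^ p ∂μ) ^ (1 / p) + (∫⁻ x, f n x ^ p ∂μ) ^ (1 / p) :=
            ENNReal.lintegral_Lp_add_le (hFmeas n).aemeasurable (hf n).aemeasurable hp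
        _ ≤ ∑ j ∈ Finset.range n, (∫⁻ x, f j x ^ p ∂μ) ^ (1 / p)
              + (∫⁻ x, f n x ^ p ∂μ) ^ (1 / p) := add_le_add_left ih _
        _ = ∑ j ∈ Finset.range (n + 1), (∫⁻ x, f j x ^ p ∂μ) ^ (1 / p) :=
            (Finset.sum_range_succ _ n).symm
  have hS : ∀ x, (∑' j, f j x) = ⨆ n, F n x := fun x => ENNReal.tsum_eq_iSup_nat
  calc (∫⁻ x, (∑' j, f j x) ^ p ∂μ) ^ (1 / p)
      = (⨆ n, ∫⁻ x, F n x ^ p ∂μ) ^ (1 / p) := by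
        congr 1
        have : ∀ x, (∑' j, f j x) ^ p = ⨆ n, F n x ^ p := fun x => by
          rw [hS x, rpow_iSup _ (hFmono x) hp0.le]
        rw [lintegral_congr this]
        exact lintegral_iSup
          (fun n => (ENNReal.continuous_rpow_const.measurable).comp (hFmeas n))
          (fun m n h x => ENNReal.rpow_le_rpow (hFmono x h) hp0.le)
    _ = ⨆ n, (∫⁻ x, F n x ^ p ∂μ) ^ (1 / p) := by
        refine rpow_iSup _ (fun m n h => lintegral_mono fun x => ?_) (by positivity)
        exact ENNReal.rpow_le_rpow (hFmono x h) hp0.le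
    _ ≤ ⨆ n, ∑ j ∈ Finset.range n, (∫⁻ x, f j x ^ p ∂μ) ^ (1 / p) := iSup_mono hfin
    _ ≤ ∑' j, (∫⁻ x, f j x ^ p ∂μ) ^ (1 / p) := iSup_le fun n => ENNReal.sum_le_tsum _

/-! ### Gradient extraction -/

lemma exists_grad {μ : Measure X} {s p : ℝ} {u : X → ℝ} (h : MemHaj μ s p u)
    {δ : ℝ≥0∞} (hδ : δ ≠ 0) :
    ∃ g : X → ℝ≥0∞, IsSGrad μ s u g ∧
      (∫⁻ x, g x ^ p ∂μ) ^ (1 / p) ≤ hajNorm μ s p u + δ := by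
  have hfin : hajNorm μ s p u < ⊤ := h.2
  have hIle : (⨅ (g : X → ℝ≥0∞) (_ : IsSGrad μ s u g), (∫⁻ x, g x ^ p ∂μ) ^ (1 / p))
      ≤ hajNorm μ s p u := le_add_self
  have hInt : (⨅ (g : X → ℝ≥0∞) (_ : IsSGrad μ s u g), (∫⁻ x, g x ^ p ∂μ) ^ (1 / p)) ≠ ⊤ :=
    ne_top_of_le_ne_top hfin.ne hIle
  have hlt : (⨅ (g : X → ℝ≥0∞) (_ : IsSGrad μ s u g), (∫⁻ x, g x ^ p ∂μ) ^ (1 / p))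
      < (⨅ (g : X → ℝ≥0∞) (_ : IsSGrad μ s u g), (∫⁻ x, g x ^ p ∂μ) ^ (1 / p)) + δ :=
    ENNReal.lt_add_right hInt hδ
  rw [iInf_lt_iff] at hlt
  obtain ⟨g, hg⟩ := hlt
  rw [iInf_lt_iff] at hg
  obtain ⟨hgrad, hglt⟩ := hg
  exact ⟨g, hgrad, le_trans hglt.le (add_le_add_left hIle δ)⟩

lemma lp_le_hajNorm (μ : Measure X) (s p : ℝ) (u : X → ℝ) :
    (∫⁻ x, ENNReal.ofReal |u x| ^ p ∂μ) ^ (1 / p) ≤ hajNorm μ s p u :=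
  self_le_add_right _ _

/-! ### The summed test function construction -/

set_option maxHeartbeats 1000000 in
lemma sumTest {μ : Measure X} {s p : ℝ} (hp : 1 ≤ p) {c : ℝ} (hc : 0 ≤ c)
    (w : ℕ → X → ℝ) (g : ℕ → X → ℝ≥0∞)
    (hw : ∀ j, Measurable (w j)) (hg : ∀ j, IsSGrad μ s (w j) (g j))
    (hL : (∑' j, (∫⁻ x, ENNReal.ofReal |w j x| ^ p ∂μ) ^ (1 / p)) ≠ ⊤) :
    ∃ W : X → ℝ, Measurable W ∧ (∀ x, 0 ≤ W x) ∧
      IsSGrad μ s W (fun x => ∑' j, g j x) ∧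
      hajNorm μ s p W ≤ (∑' j, (∫⁻ x, ENNReal.ofReal |w j x| ^ p ∂μ) ^ (1 / p))
        + (∑' j, (∫⁻ x, g j x ^ p ∂μ) ^ (1 / p)) ∧
      (∀ x j, min c (max (w j x) 0) ≤ W x) ∧
      (∃ N : Set X, μ N = 0 ∧ ∀ x ∉ N, ∀ j, max (w j x) 0 ≤ W x) := by
  have hp0 : (0 : ℝ) < p := lt_of_lt_of_le one_pos hp
  set L := ∑' j, (∫⁻ x, ENNReal.ofReal |w j x| ^ p ∂μ) ^ (1 / p) with hLdef
  set S : X → ℝ≥0∞ := fun x => ∑' j, ENNReal.ofReal (w j x) with hSdef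
  have hSmeas : Measurable S :=
    Measurable.ennreal_tsum fun j => ENNReal.measurable_ofReal.comp (hw j)
  have hSle : ∀ x, ENNReal.ofReal (w 0 x) ≤ S x := fun x => ENNReal.le_tsum 0
  -- the L^p bound on S
  have hSint : (∫⁻ x, S x ^ p ∂μ) ≤ L ^ p := by
    have h1 : (∫⁻ x, S x ^ p ∂μ) ^ (1 / p) ≤ L := by
      refine le_trans (mink hp _ fun j => ENNReal.measurable_ofReal.comp (hw j)) ?_
      refine ENNReal.tsum_le_tsum fun j => ?_
      refine ENNReal.rpow_le_rpow (lintegral_mono fun x => ?_) (by positivity)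
      exact ENNReal.rpow_le_rpow (ENNReal.ofReal_le_ofReal (le_abs_self _)) hp0.le
    calc (∫⁻ x, S x ^ p ∂μ) = ((∫⁻ x, S x ^ p ∂μ) ^ (1 / p)) ^ p := (rpow_root_pow (ne_of_gt hp0) _).symm
      _ ≤ L ^ p := ENNReal.rpow_le_rpow h1 hp0.le
  have hSintfin : (∫⁻ x, S x ^ p ∂μ) ≠ ⊤ :=
    ne_top_of_le_ne_top (ENNReal.rpow_lt_top_of_nonneg hp0.le hL).ne hSint
  have hTmeas : MeasurableSet {x | S x = ⊤} := hSmeas (measurableSet_singleton ⊤)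
  have hTnull : μ {x | S x = ⊤} = 0 := by
    by_contra hT
    have : (∫⁻ x, S x ^ p ∂μ) = ⊤ := by
      refine top_le_iff.mp ?_
      calc (⊤ : ℝ≥0∞) = ⊤ * μ {x | S x = ⊤} := (ENNReal.top_mul hT).symm
        _ = ∫⁻ x in {x | S x = ⊤}, ⊤ ∂μ := (setLIntegral_const _ _).symm
        _ = ∫⁻ x in {x | S x = ⊤}, S x ^ p ∂μ := by
            refine (setLIntegral_congr_fun hTmeas ?_).symm
            intro x hx
            show S x ^ p = ⊤
            have hx' : S x = ⊤ := hx
            rw [hx', ENNReal.top_rpow_of_pos hp0]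
        _ ≤ ∫⁻ x, S x ^ p ∂μ := setLIntegral_le_lintegral _ _
    exact hSintfin this
  -- the function W
  set W : X → ℝ := fun x => (S x).toReal + Set.indicator {y | S y = ⊤} (fun _ => c) x
    with hWdef
  have hWtop : ∀ x, S x = ⊤ → W x = c := by
    intro x hx
    show (S x).toReal + Set.indicator {y | S y = ⊤} (fun _ => c) x = c
    rw [Set.indicator_of_mem (show x ∈ {y | S y = ⊤} from hx), hx, ENNReal.toReal_top, zero_add]
  have hWfin : ∀ x, S x ≠ ⊤ → W x = (S x).toReal := by
    intro x hx
    show (S x).toReal + Set.indicator {y | S y = ⊤} (fun _ => c) x = (S x).toReal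
    rw [Set.indicator_of_notMem (show x ∉ {y | S y = ⊤} from hx), add_zero]
  have hWmeas : Measurable W :=
    (ENNReal.measurable_toReal.comp hSmeas).add
      ((measurable_const : Measurable fun _ : X => c).indicator hTmeas)
  have hWnonneg : ∀ x, 0 ≤ W x := by
    intro x
    by_cases h : S x = ⊤
    · rw [hWtop x h]; exact hc
    · rw [hWfin x h]; exact ENNReal.toReal_nonneg
  have hWdom : ∀ x, S x ≠ ⊤ → ∀ j, max (w j x) 0 ≤ W x := by
    intro x hx j
    have h1 : ENNReal.ofReal (w j x) ≤ S x := ENNReal.le_tsum j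
    have h2 := ENNReal.toReal_mono hx h1
    rw [ENNReal.toReal_ofReal'] at h2
    rw [hWfin x hx]
    exact h2
  have hWmin : ∀ x j, min c (max (w j x) 0) ≤ W x := by
    intro x j
    by_cases h : S x = ⊤
    · rw [hWtop x h]; exact min_le_left _ _
    · exact le_trans (min_le_right _ _) (hWdom x h j)
  -- gradient
  set G : X → ℝ≥0∞ := fun x => ∑' j, g j x with hGdef
  have hGmeas : Measurable G := Measurable.ennreal_tsum fun j => (hg j).1
  have hE : ∀ j, ∃ E : Set X, μ E = 0 ∧ ∀ x ∉ E, ∀ y ∉ E,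
      ENNReal.ofReal |w j x - w j y| ≤ ENNReal.ofReal (dist x y ^ s) * (g j x + g j y) :=
    fun j => (hg j).2
  choose E hEnull hEineq using hE
  set N : Set X := {x | S x = ⊤} ∪ ⋃ j, E j with hNdef
  have hNnull : μ N = 0 := measure_union_null hTnull (measure_iUnion_null hEnull)
  have hgradW : IsSGrad μ s W G := by
    refine ⟨hGmeas, N, hNnull, fun x hx y hy => ?_⟩
    have hxS : S x ≠ ⊤ := fun h => hx (Set.mem_union_left _ h)
    have hyS : S y ≠ ⊤ := fun h => hy (Set.mem_union_left _ h)
    have hxE : ∀ j, x ∉ E j := fun j h => hx (Set.mem_union_right _ (Set.mem_iUnion.2 ⟨j, h⟩))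
    have hyE : ∀ j, y ∉ E j := fun j h => hy (Set.mem_union_right _ (Set.mem_iUnion.2 ⟨j, h⟩))
    set a : ℕ → ℝ := fun j => (ENNReal.ofReal (w j x)).toReal with hadef
    set b : ℕ → ℝ := fun j => (ENNReal.ofReal (w j y)).toReal with hbdef
    have ha : Summable a := ENNReal.summable_toReal hxS
    have hb : Summable b := ENNReal.summable_toReal hyS
    have hWx : W x = ∑' j, a j := by
      rw [hWfin x hxS]
      exact ENNReal.tsum_toReal_eq fun j => ENNReal.ofReal_ne_top
    have hWy : W y = ∑' j, b j := by
      rw [hWfin y hyS]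
      exact ENNReal.tsum_toReal_eq fun j => ENNReal.ofReal_ne_top
    have habs : ∀ j, |a j - b j| ≤ |w j x - w j y| := by
      intro j
      rw [hadef, hbdef]
      simp only [ENNReal.toReal_ofReal']
      exact abs_max_sub_max_le_abs _ _ _
    have hsub : Summable fun j => |a j - b j| := by
      refine Summable.of_nonneg_of_le (fun j => abs_nonneg _) (fun j => ?_) (ha.add hb)
      refine le_trans (abs_sub _ _) ?_
      rw [abs_of_nonneg ENNReal.toReal_nonneg, abs_of_nonneg ENNReal.toReal_nonneg]
    have hkey : |W x - W y| ≤ ∑' j, |a j - b j| := by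
      rw [hWx, hWy, ← ha.tsum_sub hb]
      have h := norm_tsum_le_tsum_norm (f := fun j => a j - b j)
        (by simpa [Real.norm_eq_abs] using hsub)
      simpa [Real.norm_eq_abs] using h
    calc ENNReal.ofReal |W x - W y| ≤ ENNReal.ofReal (∑' j, |a j - b j|) :=
          ENNReal.ofReal_le_ofReal hkey
      _ = ∑' j, ENNReal.ofReal |a j - b j| :=
          ENNReal.ofReal_tsum_of_nonneg (fun j => abs_nonneg _) hsub
      _ ≤ ∑' j, ENNReal.ofReal (dist x y ^ s) * (g j x + g j y) := by
          refine ENNReal.tsum_le_tsum fun j => ?_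
          exact le_trans (ENNReal.ofReal_le_ofReal (habs j)) (hEineq j x (hxE j) y (hyE j))
      _ = ENNReal.ofReal (dist x y ^ s) * (G x + G y) := by
          rw [ENNReal.tsum_mul_left, ENNReal.tsum_add]
  -- norm bound
  have hWlp : (∫⁻ x, ENNReal.ofReal |W x| ^ p ∂μ) ^ (1 / p) ≤ L := by
    have hptw : ∀ x, ENNReal.ofReal |W x| ≤ S x := by
      intro x
      by_cases h : S x = ⊤
      · rw [h]; exact le_top
      · rw [abs_of_nonneg (hWnonneg x), hWfin x h, ENNReal.ofReal_toReal h]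
    have h1 : (∫⁻ x, ENNReal.ofReal |W x| ^ p ∂μ) ≤ ∫⁻ x, S x ^ p ∂μ :=
      lintegral_mono fun x => ENNReal.rpow_le_rpow (hptw x) hp0.le
    refine le_trans (ENNReal.rpow_le_rpow h1 (by positivity)) ?_
    refine le_trans (ENNReal.rpow_le_rpow hSint (by positivity)) (le_of_eq ?_)
    rw [← ENNReal.rpow_mul, mul_one_div_cancel (ne_of_gt hp0), ENNReal.rpow_one]
  have hWG : (∫⁻ x, G x ^ p ∂μ) ^ (1 / p) ≤ ∑' j, (∫⁻ x, g j x ^ p ∂μ) ^ (1 / p) :=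
    mink hp _ fun j => (hg j).1
  have hnorm : hajNorm μ s p W ≤ L + ∑' j, (∫⁻ x, g j x ^ p ∂μ) ^ (1 / p) := by
    unfold hajNorm
    refine add_le_add hWlp ?_
    exact le_trans (iInf_le_of_le G (iInf_le _ hgradW)) hWG
  exact ⟨W, hWmeas, hWnonneg, hgradW, hnorm, hWmin,
    ⟨{x | S x = ⊤}, hTnull, fun x hx j => hWdom x hx j⟩⟩

/-! ### L^p scaling -/

lemma lp_const_mul {μ : Measure X} {p : ℝ} (hp0 : 0 < p) (c : ℝ≥0∞)
    {h : X → ℝ≥0∞} (hm : Measurable h) :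
    (∫⁻ x, (c * h x) ^ p ∂μ) ^ (1 / p) = c * (∫⁻ x, h x ^ p ∂μ) ^ (1 / p) := by
  have heq : ∀ x, (c * h x) ^ p = c ^ p * h x ^ p := fun x =>
    ENNReal.mul_rpow_of_nonneg _ _ hp0.le
  rw [lintegral_congr heq,
    lintegral_const_mul (c ^ p)
      (show Measurable fun x => h x ^ p from
        ENNReal.continuous_rpow_const.measurable.comp hm),
    ENNReal.mul_rpow_of_nonneg _ _ (by positivity), ← ENNReal.rpow_mul,
    mul_one_div_cancel (ne_of_gt hp0), ENNReal.rpow_one]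

/-! ### The core pointwise convergence lemma -/

lemma core_basisLim {μ : Measure X}
    (hball : ∀ (x : X) (r : ℝ), 0 < r → 0 < μ (ball x r) ∧ μ (ball x r) < ⊤)
    {𝓑 : X → Set (Set X)} (h𝓑 : IsBFBasis μ 𝓑)
    {u vv : X → ℝ} (hu : Measurable u) (hvv : Measurable vv)
    {Uo : Set X} (hUv : ∀ z ∈ Uo, 1 ≤ vv z) {x : X} (hx : x ∉ Uo)
    (hcont : ContinuousOn u Uoᶜ)
    {δ γ : ℝ} (hδ0 : 0 < δ) (hδγ : δ ≤ γ) (hδγ' : γ + δ ≤ 1) (hγ0 : 0 < γ) (hγ1 : γ < 1)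
    (hmax : ∀ B : Set X, (∃ y, B ∈ 𝓑 y) → x ∈ B → rmed μ (fun z => |vv z|) B δ ≤ 1 / 2) :
    BasisLim 𝓑 x (fun B => med μ (fun z => (u z : EReal)) B γ) (u x) := by
  intro ε hε
  have hcx : ContinuousWithinAt u Uoᶜ x := hcont x hx
  rw [Metric.continuousWithinAt_iff] at hcx
  obtain ⟨r, hr0, hr⟩ := hcx (ε / 2) (by linarith)
  refine ⟨r, hr0, fun B hB hdiam => ?_⟩
  obtain ⟨hBmeas, hBpos, hBfin⟩ := basis_facts hball h𝓑 hB
  have hclose : ∀ z ∈ B, z ∉ Uo → |u z - u x| < ε / 2 := by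
    intro z hz hzU
    have hdist : dist z x < r :=
      lt_of_le_of_lt
        (Metric.dist_le_diam_of_mem (h𝓑.bounded x B hB) hz (h𝓑.mem_of x B hB)) hdiam
    have := hr hzU hdist
    rwa [Real.dist_eq] at this
  have hBU : μ (B ∩ Uo) < ENNReal.ofReal δ * μ B := by
    by_contra hge
    push_neg at hge
    have h1 : (1 : ℝ) ≤ rmed μ (fun z => |vv z|) B δ := by
      refine le_rmed (mset_nonempty hvv.abs hBmeas hBfin.ne
        (ENNReal.mul_pos (ENNReal.ofReal_pos.2 hδ0).ne' hBpos.ne')) ?_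
      intro a ha
      by_contra hcon
      push_neg at hcon
      have hsub : B ∩ Uo ⊆ {z ∈ B | a < |vv z|} := by
        rintro z ⟨hz, hzU⟩
        exact ⟨hz, lt_of_lt_of_le hcon (le_trans (hUv z hzU) (le_abs_self _))⟩
      exact absurd ha (not_lt.2 (le_trans hge (measure_mono hsub)))
    linarith [hmax B ⟨x, hB⟩ (h𝓑.mem_of x B hB)]
  have hδγmul : ENNReal.ofReal δ * μ B ≤ ENNReal.ofReal γ * μ B :=
    mul_le_mul_left (ENNReal.ofReal_le_ofReal hδγ) _
  have hupper : rmed μ u B γ ≤ u x + ε / 2 := by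
    refine rmed_le_of_mem (mset_bddBelow (gamma_mul_lt hγ1 hBpos.ne' hBfin.ne)) ?_
    show μ {z ∈ B | u x + ε / 2 < u z} < ENNReal.ofReal γ * μ B
    refine lt_of_le_of_lt (measure_mono ?_) (lt_of_lt_of_le hBU hδγmul)
    rintro z ⟨hz, hzgt⟩
    refine ⟨hz, ?_⟩
    by_contra hzU
    have h2 := (abs_lt.mp (hclose z hz hzU)).2
    linarith
  have hlower : u x - ε / 2 ≤ rmed μ u B γ := by
    refine le_rmed (mset_nonempty hu hBmeas hBfin.ne
      (ENNReal.mul_pos (ENNReal.ofReal_pos.2 hγ0).ne' hBpos.ne')) ?_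
    intro a ha
    by_contra hcon
    push_neg at hcon
    have hsub : B \ Uo ⊆ {z ∈ B | a < u z} := by
      rintro z ⟨hz, hzU⟩
      have h2 := (abs_lt.mp (hclose z hz hzU)).1
      exact ⟨hz, by linarith⟩
    have hgBfin : ENNReal.ofReal γ * μ B ≠ ⊤ := by
      refine ne_top_of_le_ne_top hBfin.ne ?_
      calc ENNReal.ofReal γ * μ B ≤ 1 * μ B :=
            mul_le_mul_left (ENNReal.ofReal_le_one.2 hγ1.le) _
        _ = μ B := one_mul _
    have hge : ENNReal.ofReal γ * μ B < μ (B \ Uo) := by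
      have hsum : ENNReal.ofReal γ * μ B + ENNReal.ofReal δ * μ B ≤ μ (B ∩ Uo) + μ (B \ Uo) := by
        refine le_trans ?_ (measure_le_inter_add_diff μ B Uo)
        rw [← add_mul]
        calc (ENNReal.ofReal γ + ENNReal.ofReal δ) * μ B
            = ENNReal.ofReal (γ + δ) * μ B := by rw [ENNReal.ofReal_add hγ0.le hδ0.le]
          _ ≤ 1 * μ B := mul_le_mul_left
              (le_trans (ENNReal.ofReal_le_ofReal hδγ') (by simp)) _
          _ = μ B := one_mul _
      by_contra hcon2
      push_neg at hcon2
      have hlt2 : μ (B ∩ Uo) + μ (B \ Uo) < ENNReal.ofReal δ * μ B + ENNReal.ofReal γ * μ B := by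
        calc μ (B ∩ Uo) + μ (B \ Uo) ≤ μ (B ∩ Uo) + ENNReal.ofReal γ * μ B :=
              add_le_add_right hcon2 _
          _ < ENNReal.ofReal δ * μ B + ENNReal.ofReal γ * μ B :=
              (ENNReal.add_lt_add_iff_right hgBfin).2 hBU
      rw [add_comm (ENNReal.ofReal δ * μ B)] at hlt2
      exact absurd (lt_of_le_of_lt hsum hlt2) (lt_irrefl _)
    exact absurd ha (not_lt.2 (le_trans hge.le (measure_mono hsub)))
  have hmed : med μ (fun z => (u z : EReal)) B γ = rmed μ u B γ := med_coe μ u B γ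
  show |med μ (fun z => (u z : EReal)) B γ - u x| < ε
  rw [hmed, abs_lt]
  constructor <;> linarith

end Aux

/-- for a Busemann–Feller basis on a separable space and `1 < p < ∞`:
(1) ⇒ (2) and (2) ⇒ (3), where (1), (2), (3) are the capacitary conditions on the median
maximal function and the median differentiation property for quasicontinuous functions. -/
theorem stmt18 {X : Type*} [MetricSpace X] [MeasurableSpace X] [BorelSpace X]
    [TopologicalSpace.SeparableSpace X]
    (μ : Measure X)
    (hball : ∀ (x : X) (r : ℝ), 0 < r → 0 < μ (ball x r) ∧ μ (ball x r) < ⊤)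
    (𝓑 : X → Set (Set X)) (h𝓑 : IsBFBasis μ 𝓑)
    (s p : ℝ) (hs0 : 0 < s) (hs1 : s ≤ 1) (hp : 1 < p) :
    ((∀ γ : ℝ, 0 < γ → γ < 1 → ∀ u : X → ℝ, MemHaj μ s p u →
        Tendsto
          (fun lam : ℝ =>
            hCap μ s p {x | (lam : EReal) < medMax μ 𝓑 (fun z => (u z : EReal)) γ x})
          atTop (𝓝 0)) →
      (∀ γ : ℝ, 0 < γ → γ < 1 → ∀ lam : ℝ, 0 < lam →
        ∀ uk : ℕ → X → ℝ, (∀ k, MemHaj μ s p (uk k)) →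
          Tendsto (fun k => hajNorm μ s p (uk k)) atTop (𝓝 0) →
          Tendsto
            (fun k =>
              hCap μ s p {x | (lam : EReal) < medMax μ 𝓑 (fun z => (uk k z : EReal)) γ x})
            atTop (𝓝 0))) ∧
    ((∀ γ : ℝ, 0 < γ → γ < 1 → ∀ lam : ℝ, 0 < lam →
        ∀ uk : ℕ → X → ℝ, (∀ k, MemHaj μ s p (uk k)) →
          Tendsto (fun k => hajNorm μ s p (uk k)) atTop (𝓝 0) →
          Tendsto
            (fun k =>
              hCap μ s p {x | (lam : EReal) < medMax μ 𝓑 (fun z => (uk k z : EReal)) γ x})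
            atTop (𝓝 0)) →
      (∀ u : X → ℝ, MemHaj μ s p u → QuasiCont μ s p u →
        ∃ E : Set X, hCap μ s p E = 0 ∧ ∀ x ∉ E, ∀ γ : ℝ, 0 < γ → γ < 1 →
          BasisLim 𝓑 x (fun B => med μ (fun z => (u z : EReal)) B γ) (u x))) := by
  have hp0 : (0 : ℝ) < p := lt_trans one_pos hp
  have hp1 : (1 : ℝ) ≤ p := hp.le
  constructor
  · -- (1) ⇒ (2)
    intro hyp1 γ hγ0 hγ1 lam hlam uk hmem hnorm
    rw [ENNReal.tendsto_nhds_zero]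
    intro ε hε
    by_contra hcon
    rw [Filter.not_eventually] at hcon
    have hfreq : ∃ᶠ k in atTop,
        ε < hCap μ s p {x | (lam : EReal) < medMax μ 𝓑 (fun z => (uk k z : EReal)) γ x} :=
      hcon.mono fun k h => not_le.1 h
    have hq16 : (0 : ℝ≥0∞) < 16⁻¹ := ENNReal.inv_pos.2 (by norm_num)
    have hsel : ∀ j : ℕ, ∃ k, hajNorm μ s p (uk k) < (16 : ℝ≥0∞)⁻¹ ^ j ∧
        ε < hCap μ s p {x | (lam : EReal) < medMax μ 𝓑 (fun z => (uk k z : EReal)) γ x} := by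
      intro j
      have hev : ∀ᶠ k in atTop, hajNorm μ s p (uk k) < (16 : ℝ≥0∞)⁻¹ ^ j :=
        hnorm.eventually_lt_const (ENNReal.pow_pos hq16 j)
      exact ((hfreq.and_eventually hev).exists).imp fun k h => ⟨h.2, h.1⟩
    choose k hk1 hk2 using hsel
    have hgsel : ∀ j : ℕ, ∃ g, IsSGrad μ s (uk (k j)) g ∧
        (∫⁻ x, g x ^ p ∂μ) ^ (1 / p) ≤ hajNorm μ s p (uk (k j)) + (16 : ℝ≥0∞)⁻¹ ^ j :=
      fun j => exists_grad (hmem (k j)) (ENNReal.pow_pos hq16 j).ne'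
    choose g0 hg0 hg0n using hgsel
    set w : ℕ → X → ℝ := fun j x => ((j : ℝ) + 1) * |uk (k j) x| with hwdef
    set g : ℕ → X → ℝ≥0∞ := fun j x => ENNReal.ofReal ((j : ℝ) + 1) * g0 j x with hgdef
    have hwmeas : ∀ j, Measurable (w j) := fun j => measurable_const.mul (hmem (k j)).1.abs
    have hwgrad : ∀ j, IsSGrad μ s (w j) (g j) := fun j =>
      IsSGrad.const_smul' (by positivity) ((hg0 j).abs')
    have hcoef : ∀ j : ℕ, ENNReal.ofReal ((j : ℝ) + 1) ≤ 2 ^ j := by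
      intro j
      rw [show ((j : ℝ) + 1) = ((j + 1 : ℕ) : ℝ) by push_cast; ring, ENNReal.ofReal_natCast]
      calc ((j + 1 : ℕ) : ℝ≥0∞) ≤ ((2 ^ j : ℕ) : ℝ≥0∞) := by
            exact_mod_cast Nat.cast_le.2 (Nat.succ_le_of_lt (Nat.lt_two_pow_self (n := j)))
        _ = 2 ^ j := by push_cast; ring
    have hwlp : ∀ j, (∫⁻ x, ENNReal.ofReal |w j x| ^ p ∂μ) ^ (1 / p)
        ≤ 2 ^ j * (16 : ℝ≥0∞)⁻¹ ^ j := by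
      intro j
      have habs : ∀ x, ENNReal.ofReal |w j x|
          = ENNReal.ofReal ((j : ℝ) + 1) * ENNReal.ofReal |uk (k j) x| := by
        intro x
        have : |w j x| = ((j : ℝ) + 1) * |uk (k j) x| := by
          rw [hwdef]
          rw [abs_mul, abs_of_nonneg (by positivity : (0 : ℝ) ≤ (j : ℝ) + 1), abs_abs]
        rw [this, ENNReal.ofReal_mul (by positivity)]
      have hmeasuk : Measurable fun x => ENNReal.ofReal |uk (k j) x| :=
        ENNReal.measurable_ofReal.comp (hmem (k j)).1.abs
      calc (∫⁻ x, ENNReal.ofReal |w j x| ^ p ∂μ) ^ (1 / p)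
          = ENNReal.ofReal ((j : ℝ) + 1)
              * (∫⁻ x, ENNReal.ofReal |uk (k j) x| ^ p ∂μ) ^ (1 / p) := by
            rw [lintegral_congr fun x => by rw [habs x]]
            exact lp_const_mul hp0 _ hmeasuk
        _ ≤ 2 ^ j * (16 : ℝ≥0∞)⁻¹ ^ j := by
            refine mul_le_mul' (hcoef j) ?_
            exact le_trans (lp_le_hajNorm μ s p _) (hk1 j).le
    have hglp : ∀ j, (∫⁻ x, g j x ^ p ∂μ) ^ (1 / p)
        ≤ 2 ^ j * (2 * (16 : ℝ≥0∞)⁻¹ ^ j) := by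
      intro j
      calc (∫⁻ x, g j x ^ p ∂μ) ^ (1 / p)
          = ENNReal.ofReal ((j : ℝ) + 1) * (∫⁻ x, g0 j x ^ p ∂μ) ^ (1 / p) :=
            lp_const_mul hp0 _ (hg0 j).1
        _ ≤ 2 ^ j * (2 * (16 : ℝ≥0∞)⁻¹ ^ j) := by
            refine mul_le_mul' (hcoef j) ?_
            refine le_trans (hg0n j) ?_
            calc hajNorm μ s p (uk (k j)) + (16 : ℝ≥0∞)⁻¹ ^ j
                ≤ (16 : ℝ≥0∞)⁻¹ ^ j + (16 : ℝ≥0∞)⁻¹ ^ j := add_le_add_left (hk1 j).le _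
              _ = 2 * (16 : ℝ≥0∞)⁻¹ ^ j := (two_mul _).symm
    have h216 : (2 : ℝ≥0∞) * (16 : ℝ≥0∞)⁻¹ = (8 : ℝ≥0∞)⁻¹ := by
      rw [show (16 : ℝ≥0∞) = 2 * 8 by norm_num,
        ENNReal.mul_inv (Or.inl (by norm_num)) (Or.inl (by norm_num)), ← mul_assoc,
        ENNReal.mul_inv_cancel (by norm_num) (by norm_num), one_mul]
    have hterm : ∀ j : ℕ, (2 : ℝ≥0∞) ^ j * (16 : ℝ≥0∞)⁻¹ ^ j = (8 : ℝ≥0∞)⁻¹ ^ j := fun j => by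
      rw [← mul_pow, h216]
    have hgeom : (∑' j : ℕ, ((8 : ℝ≥0∞)⁻¹) ^ j) ≠ ⊤ := by
      rw [ENNReal.tsum_geometric]
      refine ENNReal.inv_ne_top.2 fun h0 => ?_
      rw [tsub_eq_zero_iff_le] at h0
      exact absurd h0 (not_le.2 (ENNReal.inv_lt_one.2 (by norm_num)))
    have hLle : (∑' j, (∫⁻ x, ENNReal.ofReal |w j x| ^ p ∂μ) ^ (1 / p))
        ≤ ∑' j : ℕ, ((8 : ℝ≥0∞)⁻¹) ^ j := by
      refine ENNReal.tsum_le_tsum fun j => ?_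
      rw [← hterm j]
      exact hwlp j
    have hGle : (∑' j, (∫⁻ x, g j x ^ p ∂μ) ^ (1 / p))
        ≤ 2 * ∑' j : ℕ, ((8 : ℝ≥0∞)⁻¹) ^ j := by
      rw [← ENNReal.tsum_mul_left]
      refine ENNReal.tsum_le_tsum fun j => ?_
      refine le_trans (hglp j) (le_of_eq ?_)
      rw [← hterm j]
      ring
    have hLfin : (∑' j, (∫⁻ x, ENNReal.ofReal |w j x| ^ p ∂μ) ^ (1 / p)) ≠ ⊤ :=
      ne_top_of_le_ne_top hgeom hLle
    obtain ⟨W, hWmeas, hWpos, hWgrad, hWnorm, hWmin, N, hNnull, hWdom⟩ :=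
      sumTest hp1 (le_refl (0 : ℝ)) w g hwmeas hwgrad hLfin
    have hWfin : hajNorm μ s p W < ⊤ := by
      refine lt_of_le_of_lt (le_trans hWnorm (add_le_add hLle hGle)) ?_
      rw [lt_top_iff_ne_top]
      exact ENNReal.add_ne_top.2 ⟨hgeom, ENNReal.mul_ne_top (by norm_num) hgeom⟩
    have hWmem : MemHaj μ s p W := ⟨hWmeas, hWfin⟩
    have hcapW := hyp1 γ hγ0 hγ1 W hWmem
    have hseq : Tendsto (fun j : ℕ => ((j : ℝ) + 1) * lam) atTop atTop := by
      apply Tendsto.atTop_mul_const hlam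
      exact tendsto_atTop_add_const_right _ 1 tendsto_natCast_atTop_atTop
    have hev2 : ∀ᶠ j : ℕ in atTop, hCap μ s p
        {x | ((((j : ℝ) + 1) * lam : ℝ) : EReal)
          < medMax μ 𝓑 (fun z => (W z : EReal)) γ x} < ε :=
      hseq.eventually (hcapW.eventually_lt_const hε)
    have hN : ∀ᵐ z ∂μ, z ∉ N := by
      rw [ae_iff]
      simpa using hNnull
    have hincl : ∀ j : ℕ,
        {x | (lam : EReal) < medMax μ 𝓑 (fun z => (uk (k j) z : EReal)) γ x} ⊆
        {x | ((((j : ℝ) + 1) * lam : ℝ) : EReal)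
          < medMax μ 𝓑 (fun z => (W z : EReal)) γ x} := by
      intro j x hx
      rw [Set.mem_setOf_eq, lt_medMax_iff] at hx
      obtain ⟨B, hBex, hxB, hlt⟩ := hx
      rw [Set.mem_setOf_eq, lt_medMax_iff]
      refine ⟨B, hBex, hxB, ?_⟩
      obtain ⟨y, hBy⟩ := hBex
      obtain ⟨hBmeas, hBpos, hBfin⟩ := basis_facts hball h𝓑 hBy
      have hae : ∀ᵐ z ∂μ, ((j : ℝ) + 1) * |uk (k j) z| ≤ |W z| := by
        filter_upwards [hN] with z hz
        rw [abs_of_nonneg (hWpos z)]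
        exact le_trans (le_max_left _ _) (hWdom z hz j)
      have hchain : ((j : ℝ) + 1) * rmed μ (fun z => |uk (k j) z|) B γ
          ≤ rmed μ (fun z => |W z|) B γ := by
        rw [← rmed_smul μ _ B γ (show (0 : ℝ) < (j : ℝ) + 1 by positivity)]
        refine rmed_mono hae (mset_bddBelow (gamma_mul_lt hγ1 hBpos.ne' hBfin.ne))
          (mset_nonempty hWmeas.abs hBmeas hBfin.ne
            (ENNReal.mul_pos (ENNReal.ofReal_pos.2 hγ0).ne' hBpos.ne'))
      calc ((j : ℝ) + 1) * lam < ((j : ℝ) + 1) * rmed μ (fun z => |uk (k j) z|) B γ :=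
            mul_lt_mul_of_pos_left hlt (by positivity)
        _ ≤ rmed μ (fun z => |W z|) B γ := hchain
    have hfinal : ∀ j : ℕ, ε < hCap μ s p
        {x | ((((j : ℝ) + 1) * lam : ℝ) : EReal)
          < medMax μ 𝓑 (fun z => (W z : EReal)) γ x} :=
      fun j => lt_of_lt_of_le (hk2 j) (hCap_mono (hincl j))
    obtain ⟨j, hj⟩ := hev2.exists
    exact absurd (hfinal j) (not_lt.2 hj.le)
  · -- (2) ⇒ (3)
    intro hyp2 u hu hqc
    have hroot : ∀ a : ℝ≥0∞, (a ^ p) ^ (1 / p) = a := by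
      intro a
      rw [← ENNReal.rpow_mul, mul_one_div_cancel (ne_of_gt hp0), ENNReal.rpow_one]
    -- Step 1: quasicontinuity data
    have hstep1 : ∀ i : ℕ, ∃ v : X → ℝ, ∃ U : Set X, MemHaj μ s p v ∧ IsOpen U ∧
        (∀ z ∈ U, 1 ≤ v z) ∧ ContinuousOn u Uᶜ ∧
        hajNorm μ s p v ^ p < (2 : ℝ≥0∞)⁻¹ ^ i := by
      intro i
      obtain ⟨F, hF, hFc⟩ := hqc ((1 / 2 : ℝ) ^ i) (by positivity)
      have hF' : hCap μ s p F < (2 : ℝ≥0∞)⁻¹ ^ i := by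
        refine lt_of_lt_of_le hF (le_of_eq ?_)
        rw [show ((1 : ℝ) / 2) = ((2 : ℝ))⁻¹ by norm_num, ENNReal.ofReal_pow (by norm_num),
          ENNReal.ofReal_inv_of_pos (by norm_num), ENNReal.ofReal_ofNat]
      rw [hCap_lt_iff] at hF'
      obtain ⟨v, hvmem, ⟨U, hUopen, hFU, hUv⟩, hvlt⟩ := hF'
      exact ⟨v, U, hvmem, hUopen, hUv, hFc.mono (compl_subset_compl.2 hFU), hvlt⟩
    choose v U hvmem hUopen hUv hucont hvnorm using hstep1
    have hvhaj : ∀ i, hajNorm μ s p (v i) ≤ ((2 : ℝ≥0∞)⁻¹ ^ i) ^ ((1 : ℝ) / p) :=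
      fun i => rpow_root_le hp0 (hvnorm i).le
    have hbase : ((2 : ℝ≥0∞)⁻¹) ^ ((1 : ℝ) / p) < 1 :=
      ENNReal.rpow_lt_one (ENNReal.inv_lt_one.2 (by norm_num)) (by positivity)
    have hpowroot : ∀ i : ℕ,
        ((2 : ℝ≥0∞)⁻¹ ^ i) ^ ((1 : ℝ) / p) = (((2 : ℝ≥0∞)⁻¹) ^ ((1 : ℝ) / p)) ^ i := by
      intro i
      rw [← ENNReal.rpow_natCast ((2 : ℝ≥0∞)⁻¹) i, ← ENNReal.rpow_mul, mul_comm,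
        ENNReal.rpow_mul, ENNReal.rpow_natCast]
    have hvtend : Tendsto (fun i => hajNorm μ s p (v i)) atTop (𝓝 0) := by
      refine tendsto_of_tendsto_of_tendsto_of_le_of_le tendsto_const_nhds
        (ENNReal.tendsto_pow_atTop_nhds_zero_of_lt_one hbase) (fun i => zero_le) ?_
      intro i
      exact le_of_le_of_eq (hvhaj i) (hpowroot i)
    set δm : ℕ → ℝ := fun m => 1 / ((m : ℝ) + 2) with hδm
    have hδm0 : ∀ m, 0 < δm m := fun m => by positivity
    have hδm1 : ∀ m, δm m < 1 := by
      intro m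
      rw [hδm]
      rw [div_lt_one (by positivity)]
      have := Nat.cast_nonneg (α := ℝ) m
      linarith
    set A : ℕ → ℕ → Set X := fun i m =>
      {x | (((1 : ℝ) / 2 : ℝ) : EReal) < medMax μ 𝓑 (fun z => (v i z : EReal)) (δm m) x}
      with hA
    have hAcap : ∀ m, Tendsto (fun i => hCap μ s p (A i m)) atTop (𝓝 0) :=
      fun m => hyp2 (δm m) (hδm0 m) (hδm1 m) (1 / 2) (by norm_num) v hvmem hvtend
    set t : ℕ → ℝ≥0∞ := fun n => ((2 : ℝ≥0∞)⁻¹ ^ n) ^ ((1 : ℝ) / p) with ht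
    set cc : ℕ → ℕ → ℝ≥0∞ := fun n m => t n * (2 : ℝ≥0∞)⁻¹ ^ m * 16⁻¹ with hcc
    have htpos : ∀ n, 0 < t n := fun n =>
      ENNReal.rpow_pos (ENNReal.pow_pos (ENNReal.inv_pos.2 (by norm_num)) n)
        (ENNReal.pow_ne_top (ENNReal.inv_ne_top.2 (by norm_num)))
    have htfin : ∀ n, t n ≠ ⊤ := fun n =>
      ENNReal.rpow_ne_top_of_nonneg (by positivity)
        (ENNReal.pow_ne_top (ENNReal.inv_ne_top.2 (by norm_num)))
    have hccpos : ∀ n m, 0 < cc n m := fun n m =>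
      ENNReal.mul_pos
        (ENNReal.mul_pos (htpos n).ne'
          (ENNReal.pow_pos (ENNReal.inv_pos.2 (by norm_num)) m).ne').ne'
        (ENNReal.inv_pos.2 (by norm_num)).ne'
    have hccfin : ∀ n m, cc n m ≠ ⊤ := fun n m =>
      ENNReal.mul_ne_top
        (ENNReal.mul_ne_top (htfin n) (ENNReal.pow_ne_top (ENNReal.inv_ne_top.2 (by norm_num))))
        (ENNReal.inv_ne_top.2 (by norm_num))
    have hsel : ∀ n m : ℕ, ∃ i, hajNorm μ s p (v i) ≤ cc n m ∧
        hCap μ s p (A i m) < cc n m ^ p := by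
      intro n m
      have h1 : ∀ᶠ i in atTop, hajNorm μ s p (v i) < cc n m :=
        hvtend.eventually_lt_const (hccpos n m)
      have h2 : ∀ᶠ i in atTop, hCap μ s p (A i m) < cc n m ^ p :=
        (hAcap m).eventually_lt_const (ENNReal.rpow_pos (hccpos n m) (hccfin n m))
      exact ((h1.and h2).exists).imp fun i h => ⟨h.1.le, h.2⟩
    choose I hI1 hI2 using hsel
    have hψex : ∀ n m : ℕ, ∃ ψ : X → ℝ, ∃ V : Set X, MemHaj μ s p ψ ∧ IsOpen V ∧
        A (I n m) m ⊆ V ∧ (∀ z ∈ V, 1 ≤ ψ z) ∧ hajNorm μ s p ψ ≤ cc n m := by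
      intro n m
      have h2 := hI2 n m
      rw [hCap_lt_iff] at h2
      obtain ⟨ψ, hψmem, ⟨V, hV1, hV2, hV3⟩, hψlt⟩ := h2
      refine ⟨ψ, V, hψmem, hV1, hV2, hV3, ?_⟩
      refine le_trans (rpow_root_le hp0 hψlt.le) (le_of_eq (hroot _))
    choose ψ V hψmem hVopen hAV hVψ hψn using hψex
    have hgvex : ∀ n m : ℕ, ∃ gvv, IsSGrad μ s (v (I n m)) gvv ∧
        (∫⁻ x, gvv x ^ p ∂μ) ^ (1 / p) ≤ hajNorm μ s p (v (I n m)) + cc n m :=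
      fun n m => exists_grad (hvmem (I n m)) (hccpos n m).ne'
    choose gv hgv1 hgv2 using hgvex
    have hgψex : ∀ n m : ℕ, ∃ gψψ, IsSGrad μ s (ψ n m) gψψ ∧
        (∫⁻ x, gψψ x ^ p ∂μ) ^ (1 / p) ≤ hajNorm μ s p (ψ n m) + cc n m :=
      fun n m => exists_grad (hψmem n m) (hccpos n m).ne'
    choose gψ hgψ1 hgψ2 using hgψex
    have h162 : (16 : ℝ≥0∞)⁻¹ * 2 = 8⁻¹ := by
      rw [show (16 : ℝ≥0∞) = 8 * 2 by norm_num,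
        ENNReal.mul_inv (Or.inl (by norm_num)) (Or.inl (by norm_num)), mul_assoc,
        ENNReal.inv_mul_cancel (by norm_num) (by norm_num), mul_one]
    have hccsum : ∀ n, (∑' m, cc n m) ≤ t n * 8⁻¹ := by
      intro n
      have : ∀ m : ℕ, cc n m = (t n * 16⁻¹) * (2 : ℝ≥0∞)⁻¹ ^ m := by
        intro m
        rw [hcc]
        ring
      calc (∑' m, cc n m) = (t n * 16⁻¹) * ∑' m : ℕ, (2 : ℝ≥0∞)⁻¹ ^ m := by
            rw [← ENNReal.tsum_mul_left]
            exact tsum_congr this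
        _ = (t n * 16⁻¹) * 2 := by
            rw [ENNReal.tsum_geometric, ENNReal.one_sub_inv_two, inv_inv]
        _ ≤ t n * 8⁻¹ := le_of_eq (by rw [mul_assoc, h162])
    -- the big open sets
    have hbig : ∀ n : ℕ, ∃ G : Set X, IsOpen G ∧
        (∀ m, U (I n m) ∪ V n m ⊆ G) ∧ hCap μ s p G ≤ (2 : ℝ≥0∞)⁻¹ ^ n := by
      intro n
      set ww : ℕ → X → ℝ := fun m x => max (v (I n m) x) (ψ n m x) with hww
      set gg : ℕ → X → ℝ≥0∞ := fun m x => gv n m x + gψ n m x with hgg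
      have hwwmeas : ∀ m, Measurable (ww m) := fun m => (hvmem (I n m)).1.max (hψmem n m).1
      have hwwgrad : ∀ m, IsSGrad μ s (ww m) (gg m) := fun m =>
        IsSGrad.max' (hgv1 n m) (hgψ1 n m)
      have hwwlp : ∀ m, (∫⁻ x, ENNReal.ofReal |ww m x| ^ p ∂μ) ^ (1 / p) ≤ 2 * cc n m := by
        intro m
        have hptw : ∀ x, ENNReal.ofReal |ww m x|
            ≤ ((fun x => ENNReal.ofReal |v (I n m) x|)
                + fun x => ENNReal.ofReal |ψ n m x|) x := by
          intro x
          simp only [Pi.add_apply]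
          rw [← ENNReal.ofReal_add (abs_nonneg _) (abs_nonneg _)]
          refine ENNReal.ofReal_le_ofReal ?_
          refine le_trans (abs_max_le_max_abs_abs) ?_
          exact max_le (le_add_of_nonneg_right (abs_nonneg _))
            (le_add_of_nonneg_left (abs_nonneg _))
        have hm1 : Measurable fun x => ENNReal.ofReal |v (I n m) x| :=
          ENNReal.measurable_ofReal.comp (hvmem (I n m)).1.abs
        have hm2 : Measurable fun x => ENNReal.ofReal |ψ n m x| :=
          ENNReal.measurable_ofReal.comp (hψmem n m).1.abs
        calc (∫⁻ x, ENNReal.ofReal |ww m x| ^ p ∂μ) ^ (1 / p)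
            ≤ (∫⁻ x, ((fun x => ENNReal.ofReal |v (I n m) x|)
                + fun x => ENNReal.ofReal |ψ n m x|) x ^ p ∂μ) ^ (1 / p) := by
              refine ENNReal.rpow_le_rpow (lintegral_mono fun x => ?_) (by positivity)
              exact ENNReal.rpow_le_rpow (hptw x) hp0.le
          _ ≤ (∫⁻ x, ENNReal.ofReal |v (I n m) x| ^ p ∂μ) ^ (1 / p)
              + (∫⁻ x, ENNReal.ofReal |ψ n m x| ^ p ∂μ) ^ (1 / p) :=
              ENNReal.lintegral_Lp_add_le hm1.aemeasurable hm2.aemeasurable hp1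
          _ ≤ cc n m + cc n m := add_le_add
              (le_trans (lp_le_hajNorm μ s p _) (hI1 n m))
              (le_trans (lp_le_hajNorm μ s p _) (hψn n m))
          _ = 2 * cc n m := (two_mul _).symm
      have hggn : ∀ m, (∫⁻ x, gg m x ^ p ∂μ) ^ (1 / p) ≤ 4 * cc n m := by
        intro m
        calc (∫⁻ x, gg m x ^ p ∂μ) ^ (1 / p)
            ≤ (∫⁻ x, gv n m x ^ p ∂μ) ^ (1 / p) + (∫⁻ x, gψ n m x ^ p ∂μ) ^ (1 / p) :=
              ENNReal.lintegral_Lp_add_le (hgv1 n m).1.aemeasurable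
                (hgψ1 n m).1.aemeasurable hp1
          _ ≤ (cc n m + cc n m) + (cc n m + cc n m) := add_le_add
              (le_trans (hgv2 n m) (add_le_add_left (hI1 n m) _))
              (le_trans (hgψ2 n m) (add_le_add_left (hψn n m) _))
          _ = 4 * cc n m := by ring
      have hLle2 : (∑' m, (∫⁻ x, ENNReal.ofReal |ww m x| ^ p ∂μ) ^ (1 / p))
          ≤ 2 * ∑' m, cc n m := by
        rw [← ENNReal.tsum_mul_left]
        exact ENNReal.tsum_le_tsum fun m => hwwlp m
      have hGle2 : (∑' m, (∫⁻ x, gg m x ^ p ∂μ) ^ (1 / p)) ≤ 4 * ∑' m, cc n m := by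
        rw [← ENNReal.tsum_mul_left]
        exact ENNReal.tsum_le_tsum fun m => hggn m
      have hLfin2 : (∑' m, (∫⁻ x, ENNReal.ofReal |ww m x| ^ p ∂μ) ^ (1 / p)) ≠ ⊤ := by
        refine ne_top_of_le_ne_top ?_ hLle2
        exact ENNReal.mul_ne_top (by norm_num)
          (ne_top_of_le_ne_top (ENNReal.mul_ne_top (htfin n)
            (ENNReal.inv_ne_top.2 (by norm_num))) (hccsum n))
      obtain ⟨W, hWmeas, hWpos, hWgrad, hWnorm, hWmin, NN, hNNnull, hWdom⟩ :=
        sumTest hp1 (zero_le_one) ww gg hwwmeas hwwgrad hLfin2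
      have hWhaj : hajNorm μ s p W ≤ t n := by
        refine le_trans hWnorm ?_
        refine le_trans (add_le_add hLle2 hGle2) ?_
        calc 2 * (∑' m, cc n m) + 4 * ∑' m, cc n m = 6 * ∑' m, cc n m := by ring
          _ ≤ 6 * (t n * 8⁻¹) := mul_le_mul_right (hccsum n) _
          _ = t n * (6 * 8⁻¹) := by ring
          _ ≤ t n * 1 := by
              refine mul_le_mul_right ?_ _
              calc (6 : ℝ≥0∞) * 8⁻¹ ≤ 8 * 8⁻¹ := mul_le_mul_left (by norm_num) _
                _ = 1 := ENNReal.mul_inv_cancel (by norm_num) (by norm_num)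
          _ = t n := mul_one _
      have hWmem : MemHaj μ s p W :=
        ⟨hWmeas, lt_of_le_of_lt hWhaj (lt_top_iff_ne_top.2 (htfin n))⟩
      refine ⟨⋃ m, U (I n m) ∪ V n m,
        isOpen_iUnion fun m => (hUopen (I n m)).union (hVopen n m),
        fun m => Set.subset_iUnion (fun m => U (I n m) ∪ V n m) m, ?_⟩
      have h1W : ∀ x ∈ ⋃ m, U (I n m) ∪ V n m, 1 ≤ W x := by
        intro x hxm
        obtain ⟨m, hm⟩ := Set.mem_iUnion.1 hxm
        have hww1 : 1 ≤ ww m x := by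
          rcases hm with h | h
          · exact le_trans (hUv (I n m) x h) (le_max_left _ _)
          · exact le_trans (hVψ n m x h) (le_max_right _ _)
        have := hWmin x m
        rwa [min_eq_left (le_trans hww1 (le_max_left _ _))] at this
      refine le_trans (hCap_le_test hWmem
        (isOpen_iUnion fun m => (hUopen (I n m)).union (hVopen n m))
        (subset_refl _) h1W) ?_
      calc hajNorm μ s p W ^ p ≤ t n ^ p := by
            exact ENNReal.rpow_le_rpow hWhaj hp0.le
        _ = (2 : ℝ≥0∞)⁻¹ ^ n := rpow_root_pow (ne_of_gt hp0) _
    choose bigU hbigopen hbigsub hbigcap using hbig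
    refine ⟨⋂ n, bigU n, ?_, ?_⟩
    · refine le_antisymm ?_ zero_le
      have hle : ∀ n, hCap μ s p (⋂ n', bigU n') ≤ (2 : ℝ≥0∞)⁻¹ ^ n :=
        fun n => le_trans (hCap_mono (Set.iInter_subset _ n)) (hbigcap n)
      exact ge_of_tendsto'
        (ENNReal.tendsto_pow_atTop_nhds_zero_of_lt_one (ENNReal.inv_lt_one.2 (by norm_num))) hle
    · intro x hx γ hγ0 hγ1
      obtain ⟨n, hn⟩ : ∃ n, x ∉ bigU n := by
        by_contra hcc'
        push_neg at hcc'
        exact hx (Set.mem_iInter.2 hcc')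
      have hminpos : 0 < min γ (1 - γ) := lt_min hγ0 (by linarith)
      obtain ⟨m, hm⟩ := exists_nat_gt (1 / min γ (1 - γ))
      have hmle : δm m ≤ min γ (1 - γ) := by
        rw [hδm]
        rw [div_le_iff₀ (by positivity)]
        rw [div_lt_iff₀ hminpos] at hm
        nlinarith [hminpos.le, Nat.cast_nonneg (α := ℝ) m]
      have hxU : x ∉ U (I n m) := fun h => hn (hbigsub n m (Set.mem_union_left _ h))
      have hxV : x ∉ V n m := fun h => hn (hbigsub n m (Set.mem_union_right _ h))
      have hxA : x ∉ A (I n m) m := fun h => hxV (hAV n m h)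
      have hmax : ∀ B : Set X, (∃ y, B ∈ 𝓑 y) → x ∈ B →
          rmed μ (fun z => |v (I n m) z|) B (δm m) ≤ 1 / 2 := by
        intro B hBy hxB
        by_contra hgt
        push_neg at hgt
        exact hxA (lt_medMax_iff.2 ⟨B, hBy, hxB, hgt⟩)
      exact core_basisLim hball h𝓑 hu.1 (hvmem (I n m)).1 (hUv (I n m)) hxU
        (hucont (I n m)) (hδm0 m) (le_trans hmle (min_le_left _ _))
        (by have := le_trans hmle (min_le_right _ _); linarith) hγ0 hγ1 hmax
end
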